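/- arXiv:2302.05407 — 4 statements merged into one kernel-verified Lean document; each statement's English description precedes it below -/
import Mathlib

section
/- For each n let G ~ G(p^{(n)}) be an inhomogeneous random graph on [n], and suppose sqrt(n) · p_max(n) → 0 as n → ∞. Then for any choice of integers k_n ∈ [n], the probability that | |Z_{k_n}| − E[|Z_{k_n}|] | ≤ (1/3) n^{3/4} tends to 1 as n → ∞. -/
open MeasureTheory ProbabilityTheory Filter Real
open scoped ENNReal Classical

noncomputable section

namespace GraphMatching

variable {n : ℕ}

/-- The ordered representative of the unordered pair `{i, j}`. -/
def eidx (i j : Fin n) : Fin n × Fin n := if i ≤ j then (i, j) else (j, i)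

/-- A space of edge indicators, one for each (ordered) pair of vertices;
only the representatives with `i ≤ j` are ever read off. -/
abbrev EdgeSpace (n : ℕ) := Fin n × Fin n → Bool

/-- Bernoulli measure on `Bool` with success probability `p` (clamped to `[0,1]`). -/
def bern (p : ℝ) : Measure Bool :=
  (PMF.bernoulli (min (Real.toNNReal p) 1) (min_le_right _ _)).toMeasure

/-- The law of an inhomogeneous random graph `G(p)`, encoded by independent edge
indicators with `P((i,j) present) = p i j` for the representative pairs. -/
def edgeMeasure (n : ℕ) (p : Fin n → Fin n → ℝ) : Measure (EdgeSpace n) :=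
  Measure.pi fun e => bern (p e.1 e.2)

/-- The adjacency relation of the graph encoded by `g`. -/
def adjOf (g : EdgeSpace n) (i j : Fin n) : Prop := i ≠ j ∧ g (eidx i j) = true

/-- The degree of vertex `i` in the graph encoded by `g`. -/
def deg (g : EdgeSpace n) (i : Fin n) : ℕ :=
  (Finset.univ.filter fun j => adjOf g i j).card

/-- `|Z_k|`: the number of vertices of degree at most `k`. -/
def Zcard (k : ℕ) (g : EdgeSpace n) : ℕ :=
  (Finset.univ.filter fun i => deg g i ≤ k).card


namespace ZkAux

variable {n : ℕ}

instance (p : ℝ) : IsProbabilityMeasure (bern p) := by unfold bern; infer_instance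

instance (p : Fin n → Fin n → ℝ) : IsProbabilityMeasure (edgeMeasure n p) := by
  unfold edgeMeasure; infer_instance

lemma eidx_eq {a b c d : Fin n} (h : eidx a b = eidx c d) :
    (a = c ∧ b = d) ∨ (a = d ∧ b = c) := by
  unfold eidx at h; split_ifs at h <;> simp [Prod.ext_iff] at h <;> tauto

lemma eidx_comm (a b : Fin n) : eidx a b = eidx b a := by
  unfold eidx
  rcases eq_or_ne a b with rfl | hab
  · simp
  split_ifs with h1 h2 h2
  · exact absurd (le_antisymm h1 h2) hab
  · rfl
  · rfl
  · exact absurd (le_of_not_ge h1) h2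

/-- The indicator that vertex `i` has degree at most `k`. -/
def XI (k : ℕ) (i : Fin n) (g : EdgeSpace n) : ℝ := if deg g i ≤ k then 1 else 0

lemma XI_nonneg (k : ℕ) (i : Fin n) (g : EdgeSpace n) : 0 ≤ XI k i g := by
  unfold XI; split <;> norm_num

lemma XI_le_one (k : ℕ) (i : Fin n) (g : EdgeSpace n) : XI k i g ≤ 1 := by
  unfold XI; split <;> norm_num

lemma Zcard_eq_sum (k : ℕ) (g : EdgeSpace n) :
    (Zcard k g : ℝ) = ∑ i : Fin n, XI k i g := by
  unfold Zcard XI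
  rw [Finset.card_filter]
  push_cast
  rfl

lemma deg_congr (g g' : EdgeSpace n) (i : Fin n)
    (h : ∀ l, l ≠ i → g (eidx i l) = g' (eidx i l)) : deg g i = deg g' i := by
  unfold deg
  congr 1
  apply Finset.filter_congr
  intro l _
  unfold adjOf
  rcases eq_or_ne l i with rfl | hl
  · simp
  · rw [h l hl]

lemma bern_true {q : ℝ} (h1 : q ≤ 1) : bern q {true} = ENNReal.ofReal q := by
  rw [bern, PMF.toMeasure_apply_singleton _ _ (measurableSet_singleton _)]
  simp [PMF.bernoulli_apply, min_eq_left (Real.toNNReal_le_one.2 h1), ENNReal.ofReal]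

lemma meas_coord (p : Fin n → Fin n → ℝ) (hp1 : ∀ a b, p a b ≤ 1) (e0 : Fin n × Fin n) :
    edgeMeasure n p {g : EdgeSpace n | g e0 = true} = ENNReal.ofReal (p e0.1 e0.2) := by
  have hset : {g : EdgeSpace n | g e0 = true}
      = Set.univ.pi (fun e => if e = e0 then ({true} : Set Bool) else Set.univ) := by
    ext g
    simp only [Set.mem_setOf_eq, Set.mem_pi, Set.mem_univ, true_implies]
    constructor
    · intro h e
      split_ifs with he
      · subst he; simpa using h
      · trivial
    · intro h
      have := h e0
      simpa using this
  rw [hset, edgeMeasure, Measure.pi_pi]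
  rw [Finset.prod_eq_single e0]
  · simp [bern_true (hp1 _ _)]
  · intro b _ hb; rw [if_neg hb]; exact measure_univ
  · simp

lemma integral_indE (p : Fin n → Fin n → ℝ) (hp0 : ∀ a b, 0 ≤ p a b)
    (hp1 : ∀ a b, p a b ≤ 1) (e0 : Fin n × Fin n) :
    ∫ g, (if g e0 = true then (1:ℝ) else 0) ∂edgeMeasure n p = p e0.1 e0.2 := by
  have : (fun g : EdgeSpace n => (if g e0 = true then (1:ℝ) else 0))
      = Set.indicator {g : EdgeSpace n | g e0 = true} (fun _ => (1:ℝ)) := by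
    ext g; simp [Set.indicator_apply]
  rw [this, integral_indicator_const _ (MeasurableSet.of_discrete), measureReal_def, meas_coord p hp1 e0,
    ENNReal.toReal_ofReal (hp0 _ _)]
  simp

lemma factor (p : Fin n → Fin n → ℝ) (q' : Fin n × Fin n → Prop)
    (F : ({x // q' x} → Bool) → ℝ) (H : ({x // ¬ q' x} → Bool) → ℝ) :
    ∫ g : EdgeSpace n, F (fun x => g x.1) * H (fun x => g x.1) ∂edgeMeasure n p
      = (∫ g : EdgeSpace n, F (fun x => g x.1) ∂edgeMeasure n p)
        * ∫ g : EdgeSpace n, H (fun x => g x.1) ∂edgeMeasure n p := by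
  have mp := measurePreserving_piEquivPiSubtypeProd
    (fun e : Fin n × Fin n => bern (p e.1 e.2)) q'
  have me := (MeasurableEquiv.piEquivPiSubtypeProd
    (fun _ : Fin n × Fin n => Bool) q').measurableEmbedding
  have h1 : ∫ g : EdgeSpace n, F (fun x => g x.1) * H (fun x => g x.1) ∂edgeMeasure n p
      = ∫ z, F z.1 * H z.2
          ∂((Measure.pi fun x : {x // q' x} => bern (p x.1.1 x.1.2)).prod
            (Measure.pi fun x : {x // ¬ q' x} => bern (p x.1.1 x.1.2))) := by
    rw [← mp.integral_comp me (fun z => F z.1 * H z.2)]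
    rfl
  have h2 : ∫ g : EdgeSpace n, F (fun x => g x.1) ∂edgeMeasure n p
      = ∫ z, F z.1
          ∂((Measure.pi fun x : {x // q' x} => bern (p x.1.1 x.1.2)).prod
            (Measure.pi fun x : {x // ¬ q' x} => bern (p x.1.1 x.1.2))) := by
    rw [← mp.integral_comp me (fun z => F z.1)]
    rfl
  have h3 : ∫ g : EdgeSpace n, H (fun x => g x.1) ∂edgeMeasure n p
      = ∫ z, H z.2
          ∂((Measure.pi fun x : {x // q' x} => bern (p x.1.1 x.1.2)).prod
            (Measure.pi fun x : {x // ¬ q' x} => bern (p x.1.1 x.1.2))) := by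
    rw [← mp.integral_comp me (fun z => H z.2)]
    rfl
  rw [h1, h2, h3, integral_prod_mul F H]
  have e2 : ∫ z, F z.1
        ∂((Measure.pi fun x : {x // q' x} => bern (p x.1.1 x.1.2)).prod
          (Measure.pi fun x : {x // ¬ q' x} => bern (p x.1.1 x.1.2)))
      = (∫ h, F h ∂(Measure.pi fun x : {x // q' x} => bern (p x.1.1 x.1.2))) := by
    have := integral_prod_mul (μ := Measure.pi fun x : {x // q' x} => bern (p x.1.1 x.1.2))
      (ν := Measure.pi fun x : {x // ¬ q' x} => bern (p x.1.1 x.1.2)) F (fun _ => (1:ℝ))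
    simpa using this
  have e3 : ∫ z, H z.2
        ∂((Measure.pi fun x : {x // q' x} => bern (p x.1.1 x.1.2)).prod
          (Measure.pi fun x : {x // ¬ q' x} => bern (p x.1.1 x.1.2)))
      = (∫ h, H h ∂(Measure.pi fun x : {x // ¬ q' x} => bern (p x.1.1 x.1.2))) := by
    have := integral_prod_mul (μ := Measure.pi fun x : {x // q' x} => bern (p x.1.1 x.1.2))
      (ν := Measure.pi fun x : {x // ¬ q' x} => bern (p x.1.1 x.1.2)) (fun _ => (1:ℝ)) H
    simpa using this
  rw [e2, e3]

lemma prod_sub_prod {a b a' b' t : ℝ} (ha : 0 ≤ a) (ha1 : a ≤ 1) (hb : 0 ≤ b) (hb1 : b ≤ 1)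
    (ha' : 0 ≤ a') (ha1' : a' ≤ 1) (hb' : 0 ≤ b') (hb1' : b' ≤ 1)
    (h1 : |a - a'| ≤ t) (h2 : |b - b'| ≤ t) : a * b - a' * b' ≤ 2 * t := by
  have ht : 0 ≤ t := le_trans (abs_nonneg _) h1
  have e1 : a - a' ≤ t := le_trans (le_abs_self _) h1
  have e2 : b - b' ≤ t := le_trans (le_abs_self _) h2
  nlinarith [mul_le_mul_of_nonneg_right e1 hb, mul_le_mul_of_nonneg_left e2 ha']

lemma mean_nonneg (p : Fin n → Fin n → ℝ) (k : ℕ) (i : Fin n) :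
    0 ≤ ∫ g, XI k i g ∂edgeMeasure n p :=
  integral_nonneg fun g => XI_nonneg k i g

lemma mean_le_one (p : Fin n → Fin n → ℝ) (k : ℕ) (i : Fin n) :
    ∫ g, XI k i g ∂edgeMeasure n p ≤ 1 := by
  calc ∫ g, XI k i g ∂edgeMeasure n p ≤ ∫ _g, (1:ℝ) ∂edgeMeasure n p :=
        integral_mono .of_finite .of_finite fun g => XI_le_one k i g
    _ = 1 := by simp

lemma cov_le (p : Fin n → Fin n → ℝ) (hp0 : ∀ a b, 0 ≤ p a b) (hp1 : ∀ a b, p a b ≤ 1)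
    {P : ℝ} (hP : ∀ a b, p a b ≤ P) (k : ℕ) {i j : Fin n} (hij : i ≠ j) :
    ∫ g, XI k i g * XI k j g ∂edgeMeasure n p
      ≤ (∫ g, XI k i g ∂edgeMeasure n p) * (∫ g, XI k j g ∂edgeMeasure n p) + 4 * P := by
  set μ := edgeMeasure n p with hμ
  set ov : EdgeSpace n → EdgeSpace n := fun g => Function.update g (eidx i j) false with hov
  set indE : EdgeSpace n → ℝ := fun g => if g (eidx i j) = true then 1 else 0 with hindE
  have hPnn : 0 ≤ P := le_trans (hp0 i j) (hP i j)
  -- pointwise difference bound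
  have hdiff : ∀ (v : Fin n) (g : EdgeSpace n), |XI k v g - XI k v (ov g)| ≤ indE g := by
    intro v g
    by_cases h : g (eidx i j) = true
    · simp only [hindE, if_pos h]
      have h1 := XI_nonneg k v g; have h2 := XI_le_one k v g
      have h3 := XI_nonneg k v (ov g); have h4 := XI_le_one k v (ov g)
      rw [abs_le]; constructor <;> linarith
    · have : ov g = g := by
        funext e
        rw [hov]; simp only [Function.update_apply]
        split_ifs with he
        · subst he
          simp only [Bool.not_eq_true] at h
          exact h.symm
        · rfl
      rw [this, sub_self, abs_zero, hindE]
      simp only [h]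
      norm_num
  -- the decoupled indicators factor across disjoint coordinate sets
  set q' : Fin n × Fin n → Prop := fun x => ∃ l : Fin n, l ≠ i ∧ l ≠ j ∧ x = eidx i l with hq'
  set F : ({x // q' x} → Bool) → ℝ :=
    fun h => XI k i (ov (fun e => if he : q' e then h ⟨e, he⟩ else false)) with hF
  set H : ({x // ¬ q' x} → Bool) → ℝ :=
    fun h => XI k j (ov (fun e => if he : ¬ q' e then h ⟨e, he⟩ else false)) with hH
  have claimF : ∀ g : EdgeSpace n, XI k i (ov g) = F (fun x => g x.1) := by
    intro g
    show XI k i (ov g) = XI k i (ov (fun e => if he : q' e then g e else false))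
    have hd : deg (ov g) i = deg (ov (fun e => if he : q' e then g e else false)) i := by
      apply deg_congr
      intro l hl
      rcases eq_or_ne l j with rfl | hlj
      · simp [hov, Function.update_self]
      · have hq : q' (eidx i l) := ⟨l, hl, hlj, rfl⟩
        have hne : eidx i l ≠ eidx i j := by
          intro h
          rcases eidx_eq h with ⟨-, h2⟩ | ⟨h1, -⟩
          · exact hlj h2
          · exact hij h1
        show Function.update g (eidx i j) false (eidx i l)
          = Function.update (fun e => if he : q' e then g e else false) (eidx i j) false (eidx i l)
        rw [Function.update_of_ne hne, Function.update_of_ne hne, dif_pos hq]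
    unfold XI
    rw [hd]
  have claimH : ∀ g : EdgeSpace n, XI k j (ov g) = H (fun x => g x.1) := by
    intro g
    show XI k j (ov g) = XI k j (ov (fun e => if he : ¬ q' e then g e else false))
    have hd : deg (ov g) j = deg (ov (fun e => if he : ¬ q' e then g e else false)) j := by
      apply deg_congr
      intro l hl
      rcases eq_or_ne l i with h | hli
      · show Function.update g (eidx i j) false (eidx j l)
          = Function.update (fun e => if he : ¬ q' e then g e else false) (eidx i j) false (eidx j l)
        rw [h, eidx_comm j i, Function.update_self, Function.update_self]
      · have hnq : ¬ q' (eidx j l) := by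
          rintro ⟨m, hmi, hmj, hm⟩
          rcases eidx_eq hm.symm with ⟨h1, -⟩ | ⟨-, h2⟩
          · exact hij h1
          · exact hmj h2
        have hne : eidx j l ≠ eidx i j := by
          intro h
          rcases eidx_eq h with ⟨h1, -⟩ | ⟨-, h2⟩
          · exact hij h1.symm
          · exact hli h2
        show Function.update g (eidx i j) false (eidx j l)
          = Function.update (fun e => if he : ¬ q' e then g e else false) (eidx i j) false (eidx j l)
        rw [Function.update_of_ne hne, Function.update_of_ne hne, dif_pos hnq]
    unfold XI
    rw [hd]
  have hXTprod : ∫ g, XI k i (ov g) * XI k j (ov g) ∂μ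
      = (∫ g, XI k i (ov g) ∂μ) * ∫ g, XI k j (ov g) ∂μ := by
    simp only [claimF, claimH]
    exact factor p q' F H
  -- mean comparison
  have hid := integral_indE p hp0 hp1 (eidx i j)
  have hindP : ∫ g, indE g ∂μ ≤ P := le_trans (le_of_eq hid) (hP _ _)
  have hmd : ∀ v : Fin n, |(∫ g, XI k v g ∂μ) - ∫ g, XI k v (ov g) ∂μ| ≤ P := by
    intro v
    have h1 : (∫ g, XI k v g ∂μ) - ∫ g, XI k v (ov g) ∂μ
        = ∫ g, (XI k v g - XI k v (ov g)) ∂μ := (integral_sub .of_finite .of_finite).symm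
    rw [h1]
    calc |∫ g, (XI k v g - XI k v (ov g)) ∂μ| ≤ ∫ g, |XI k v g - XI k v (ov g)| ∂μ := by
          simpa [Real.norm_eq_abs] using
            norm_integral_le_integral_norm (fun g => XI k v g - XI k v (ov g)) (μ := μ)
      _ ≤ ∫ g, indE g ∂μ := integral_mono .of_finite .of_finite (hdiff v)
      _ ≤ P := hindP
  -- step 1 : decouple inside the product integral
  have hpt : ∀ g, XI k i g * XI k j g - XI k i (ov g) * XI k j (ov g) ≤ 2 * indE g :=
    fun g => prod_sub_prod (XI_nonneg k i g) (XI_le_one k i g) (XI_nonneg k j g)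
      (XI_le_one k j g) (XI_nonneg k i (ov g)) (XI_le_one k i (ov g))
      (XI_nonneg k j (ov g)) (XI_le_one k j (ov g)) (hdiff i g) (hdiff j g)
  have t1 : ∫ g, (XI k i g * XI k j g - XI k i (ov g) * XI k j (ov g)) ∂μ
      ≤ ∫ g, 2 * indE g ∂μ := integral_mono .of_finite .of_finite hpt
  rw [integral_sub .of_finite .of_finite, integral_const_mul] at t1
  -- step 2 : compare the means
  have hov_nn : ∀ v : Fin n, 0 ≤ ∫ g, XI k v (ov g) ∂μ :=
    fun v => integral_nonneg fun g => XI_nonneg k v (ov g)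
  have hov_le : ∀ v : Fin n, ∫ g, XI k v (ov g) ∂μ ≤ 1 := by
    intro v
    calc ∫ g, XI k v (ov g) ∂μ ≤ ∫ _g, (1:ℝ) ∂μ :=
          integral_mono .of_finite .of_finite fun g => XI_le_one k v (ov g)
      _ = 1 := by simp
  have step2 : (∫ g, XI k i (ov g) ∂μ) * (∫ g, XI k j (ov g) ∂μ)
      - (∫ g, XI k i g ∂μ) * (∫ g, XI k j g ∂μ) ≤ 2 * P := by
    apply prod_sub_prod (hov_nn i) (hov_le i) (hov_nn j) (hov_le j)
      (mean_nonneg p k i) (mean_le_one p k i) (mean_nonneg p k j) (mean_le_one p k j)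
    · rw [abs_sub_comm]; exact hmd i
    · rw [abs_sub_comm]; exact hmd j
  have hindPnn : 0 ≤ ∫ g, indE g ∂μ := integral_nonneg fun g => by
    rw [hindE]; dsimp only; split <;> norm_num
  nlinarith [hXTprod, t1, step2]

lemma var_le (p : Fin n → Fin n → ℝ) (hp0 : ∀ a b, 0 ≤ p a b) (hp1 : ∀ a b, p a b ≤ 1)
    {P : ℝ} (hP : ∀ a b, p a b ≤ P) (hPnn : 0 ≤ P) (k : ℕ) :
    variance (fun g => (Zcard k g : ℝ)) (edgeMeasure n p)
      ≤ (n : ℝ) + (n : ℝ) ^ 2 * (4 * P) := by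
  set μ := edgeMeasure n p with hμ
  have hmem : MemLp (fun g : EdgeSpace n => (Zcard k g : ℝ)) 2 μ := .of_discrete
  rw [variance_eq_sub hmem]
  have hsq : μ[(fun g : EdgeSpace n => (Zcard k g : ℝ)) ^ 2]
      = ∑ i : Fin n, ∑ j : Fin n, ∫ g, XI k i g * XI k j g ∂μ := by
    have h1 : (fun g : EdgeSpace n => (Zcard k g : ℝ)) ^ 2
        = fun g => ∑ i : Fin n, ∑ j : Fin n, XI k i g * XI k j g := by
      funext g
      simp only [Pi.pow_apply, Zcard_eq_sum, sq]
      rw [Finset.sum_mul_sum]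
    rw [h1, integral_finset_sum _ fun i _ => .of_finite]
    exact Finset.sum_congr rfl fun i _ => integral_finset_sum _ fun j _ => .of_finite
  have hm : μ[fun g : EdgeSpace n => (Zcard k g : ℝ)]
      = ∑ i : Fin n, ∫ g, XI k i g ∂μ := by
    simp only [Zcard_eq_sum]
    exact integral_finset_sum _ fun i _ => .of_finite
  rw [hsq, hm, sq, Finset.sum_mul_sum, ← Finset.sum_sub_distrib]
  simp only [← Finset.sum_sub_distrib]
  have hterm : ∀ i j : Fin n,
      (∫ g, XI k i g * XI k j g ∂μ) - (∫ g, XI k i g ∂μ) * (∫ g, XI k j g ∂μ)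
        ≤ (if i = j then (1:ℝ) else 0) + 4 * P := by
    intro i j
    rcases eq_or_ne i j with rfl | hij
    · rw [if_pos rfl]
      have h1 : ∫ g, XI k i g * XI k i g ∂μ ≤ 1 := by
        calc ∫ g, XI k i g * XI k i g ∂μ ≤ ∫ _g, (1:ℝ) ∂μ := by
              apply integral_mono .of_finite .of_finite
              intro g
              show XI k i g * XI k i g ≤ 1
              have := XI_nonneg k i g; have := XI_le_one k i g
              nlinarith
          _ = 1 := by simp
      nlinarith [mul_self_nonneg (∫ g, XI k i g ∂μ)]
    · rw [if_neg hij]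
      have := cov_le p hp0 hp1 hP k hij
      linarith
  calc (∑ i : Fin n, ∑ j : Fin n,
        ((∫ g, XI k i g * XI k j g ∂μ) - (∫ g, XI k i g ∂μ) * (∫ g, XI k j g ∂μ)))
      ≤ ∑ i : Fin n, ∑ j : Fin n, ((if i = j then (1:ℝ) else 0) + 4 * P) :=
        Finset.sum_le_sum fun i _ => Finset.sum_le_sum fun j _ => hterm i j
    _ = (n : ℝ) + (n : ℝ) ^ 2 * (4 * P) := by
        simp [Finset.sum_add_distrib, Finset.sum_ite_eq, sq]
        ring

end ZkAux

end GraphMatching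

end

open GraphMatching in
/-- Lemma 3, concentration of `|Z_k|`:
if `√n · p_max(n) → 0` then `| |Z_{k_n}| − E[|Z_{k_n}|] | ≤ n^{3/4}/3` w.h.p.,
for any choice of integers `k_n ∈ [n]`. -/
theorem Zk_concentration
    (p : ∀ n, Fin n → Fin n → ℝ)
    (hsym : ∀ n i j, p n i j = p n j i)
    (hp0 : ∀ n i j, 0 ≤ p n i j) (hp1 : ∀ n i j, p n i j ≤ 1)
    (hdiag : ∀ n i, p n i i = 0)
    (hpmax : Tendsto (fun n : ℕ =>
      Real.sqrt n * ⨆ e : Fin n × Fin n, p n e.1 e.2) atTop (nhds 0))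
    (k : ℕ → ℕ) (hk : ∀ n : ℕ, 1 ≤ n → 1 ≤ k n ∧ k n ≤ n) :
    Tendsto
      (fun n => edgeMeasure n (p n)
        {g | |(Zcard (k n) g : ℝ) - ∫ g', (Zcard (k n) g' : ℝ) ∂edgeMeasure n (p n)|
          ≤ (1 / 3) * (n : ℝ) ^ ((3 : ℝ) / 4)})
      atTop (nhds 1) := by

  set P : ℕ → ℝ := fun n => ⨆ e : Fin n × Fin n, p n e.1 e.2 with hPdef
  set b : ℕ → ℝ := fun n => 9 * (n : ℝ) ^ (-(1:ℝ)/2) + 36 * (Real.sqrt n * P n) with hbdef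
  set E : ∀ n, Set (EdgeSpace n) := fun n =>
    {g | |(Zcard (k n) g : ℝ) - ∫ g', (Zcard (k n) g' : ℝ) ∂edgeMeasure n (p n)|
      ≤ (1 / 3) * (n : ℝ) ^ ((3 : ℝ) / 4)} with hEdef
  -- the upper bound on the bad event, for n ≥ 1
  have key : ∀ n : ℕ, 1 ≤ n →
      edgeMeasure n (p n) (E n)ᶜ ≤ ENNReal.ofReal (b n) := by
    intro n hn
    have hx : (0:ℝ) < n := by exact_mod_cast hn
    have hbdd : BddAbove (Set.range fun e : Fin n × Fin n => p n e.1 e.2) :=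
      (Set.finite_range _).bddAbove
    have hP : ∀ a c : Fin n, p n a c ≤ P n := fun a c => le_ciSup hbdd (a, c)
    have i0 : Fin n := ⟨0, hn⟩
    have hPnn : 0 ≤ P n := le_trans (le_of_eq (hdiag n i0).symm) (hP i0 i0)
    have hc : (0:ℝ) < (1 / 3) * (n : ℝ) ^ ((3 : ℝ) / 4) := by
      positivity
    have hcheb := meas_ge_le_variance_div_sq
      (μ := edgeMeasure n (p n)) (X := fun g => (Zcard (k n) g : ℝ))
      MemLp.of_discrete hc
    have hsub : (E n)ᶜ ⊆ {g : EdgeSpace n |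
        (1 / 3) * (n : ℝ) ^ ((3 : ℝ) / 4)
          ≤ |(Zcard (k n) g : ℝ) - ∫ g', (Zcard (k n) g' : ℝ) ∂edgeMeasure n (p n)|} := by
      intro g hg
      simp only [hEdef, Set.mem_compl_iff, Set.mem_setOf_eq, not_le] at hg
      exact le_of_lt hg
    have hvar := GraphMatching.ZkAux.var_le (p n) (hp0 n) (hp1 n) hP hPnn (k n)
    have hdivle : variance (fun g => (Zcard (k n) g : ℝ)) (edgeMeasure n (p n))
        / ((1 / 3) * (n : ℝ) ^ ((3 : ℝ) / 4)) ^ 2 ≤ b n := by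
      rw [div_le_iff₀ (by positivity)]
      have hsq : ((1 / 3) * (n : ℝ) ^ ((3 : ℝ) / 4)) ^ 2
          = (1/9) * (n : ℝ) ^ ((3 : ℝ) / 2) := by
        rw [mul_pow, ← Real.rpow_natCast ((n:ℝ) ^ ((3:ℝ)/4)) 2, ← Real.rpow_mul hx.le]
        norm_num
      have hbc : b n * ((1 / 3) * (n : ℝ) ^ ((3 : ℝ) / 4)) ^ 2
          = (n : ℝ) + (n : ℝ) ^ 2 * (4 * P n) := by
        rw [hsq, hbdef]
        have h1 : (n:ℝ) ^ (-(1:ℝ)/2) * (n:ℝ) ^ ((3:ℝ)/2) = (n:ℝ) := by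
          rw [← Real.rpow_add hx]; norm_num
        have h2 : Real.sqrt n * (n:ℝ) ^ ((3:ℝ)/2) = (n:ℝ) ^ 2 := by
          rw [Real.sqrt_eq_rpow, ← Real.rpow_add hx, ← Real.rpow_natCast (n:ℝ) 2]
          norm_num
        calc (9 * (n : ℝ) ^ (-(1:ℝ)/2) + 36 * (Real.sqrt n * P n))
              * (1/9 * (n : ℝ) ^ ((3:ℝ)/2))
            = ((n:ℝ) ^ (-(1:ℝ)/2) * (n:ℝ) ^ ((3:ℝ)/2))
              + 4 * P n * (Real.sqrt n * (n:ℝ) ^ ((3:ℝ)/2)) := by ring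
          _ = (n : ℝ) + (n : ℝ) ^ 2 * (4 * P n) := by rw [h1, h2]; ring
      rw [hbc]
      exact hvar
    calc edgeMeasure n (p n) (E n)ᶜ
        ≤ edgeMeasure n (p n) {g : EdgeSpace n |
            (1 / 3) * (n : ℝ) ^ ((3 : ℝ) / 4)
              ≤ |(Zcard (k n) g : ℝ) - ∫ g', (Zcard (k n) g' : ℝ) ∂edgeMeasure n (p n)|} :=
          measure_mono hsub
      _ ≤ ENNReal.ofReal (variance (fun g => (Zcard (k n) g : ℝ)) (edgeMeasure n (p n))
            / ((1 / 3) * (n : ℝ) ^ ((3 : ℝ) / 4)) ^ 2) := hcheb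
      _ ≤ ENNReal.ofReal (b n) := ENNReal.ofReal_le_ofReal hdivle
  -- b tends to 0
  have hb0 : Tendsto b atTop (nhds 0) := by
    have t1 : Tendsto (fun n : ℕ => 9 * (n : ℝ) ^ (-(1:ℝ)/2)) atTop (nhds 0) := by
      have : Tendsto (fun x : ℝ => x ^ (-(1:ℝ)/2)) atTop (nhds 0) := by
        have := tendsto_rpow_neg_atTop (y := 1/2) (by norm_num)
        simpa [neg_div] using this
      have := (this.comp tendsto_natCast_atTop_atTop).const_mul (9:ℝ)
      simpa using this
    have t2 : Tendsto (fun n : ℕ => 36 * (Real.sqrt n * P n)) atTop (nhds 0) := by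
      have := hpmax.const_mul (36:ℝ)
      simpa using this
    have := t1.add t2
    simpa using this
  -- squeeze
  have l1 : Tendsto (fun n => 1 - ENNReal.ofReal (b n)) atTop (nhds 1) := by
    have h2 : Tendsto (fun n => ENNReal.ofReal (b n)) atTop (nhds 0) := by
      have := (ENNReal.continuous_ofReal.tendsto 0).comp hb0
      simpa [Function.comp_def] using this
    have := ENNReal.Tendsto.sub (tendsto_const_nhds (x := (1:ℝ≥0∞))) h2 (by simp)
    simpa using this
  have hup : ∀ n : ℕ, edgeMeasure n (p n) (E n) ≤ 1 := fun n => prob_le_one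
  have hlo : ∀ᶠ n in atTop, 1 - ENNReal.ofReal (b n) ≤ edgeMeasure n (p n) (E n) := by
    filter_upwards [eventually_ge_atTop 1] with n hn
    have hcompl : edgeMeasure n (p n) (E n) = 1 - edgeMeasure n (p n) (E n)ᶜ := by
      have h := prob_compl_eq_one_sub (μ := edgeMeasure n (p n)) (s := (E n)ᶜ)
        MeasurableSet.of_discrete
      rw [compl_compl] at h
      exact h
    rw [hcompl]
    exact tsub_le_tsub_left (key n hn) 1
  exact tendsto_of_tendsto_of_tendsto_of_le_of_le' l1 tendsto_const_nhds hlo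
    (Eventually.of_forall hup)
end

section
/- For each n let G ~ G(p^{(n)}) be an inhomogeneous random graph on [n], and let γ_n > 0 satisfy γ_n/sqrt(n) → 0 and p_max(n) ≤ γ_n/n. Then with probability tending to 1 as n → ∞, every subset S ⊆ [n] with |S| ≤ (3/(4γ_n²)) n spans at most 2|S| edges in the induced subgraph G{S}. -/
open MeasureTheory ProbabilityTheory Filter Real
open scoped ENNReal Classical

noncomputable section
namespace GraphMatching

-- AUX
lemma pow_le_exp_mul_factorial (k : ℕ) : (k:ℝ)^k ≤ Real.exp k * Nat.factorial k := by
  have h1 : (k:ℝ)^k / Nat.factorial k ≤ Real.exp k := by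
    calc (k:ℝ)^k / Nat.factorial k ≤ ∑ i ∈ Finset.range (k+1), (k:ℝ)^i / Nat.factorial i := by
          refine Finset.single_le_sum (f := fun i => (k:ℝ)^i / Nat.factorial i) ?_ (Finset.self_mem_range_succ k)
          intro i _; positivity
      _ ≤ Real.exp k := Real.sum_le_exp_of_nonneg (by positivity) _
  calc (k:ℝ)^k = ((k:ℝ)^k / Nat.factorial k) * Nat.factorial k := by
        field_simp
    _ ≤ Real.exp k * Nat.factorial k := by
        exact mul_le_mul_of_nonneg_right h1 (by positivity)

instance bern_prob (q : ℝ) : IsProbabilityMeasure (bern q) := by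
  unfold bern; infer_instance

instance edgeMeasure_prob (n : ℕ) (p : Fin n → Fin n → ℝ) :
    IsProbabilityMeasure (edgeMeasure n p) := by
  unfold edgeMeasure; infer_instance

lemma bern_apply_true (q : ℝ) : bern q ({true} : Set Bool) = min (ENNReal.ofReal q) 1 := by
  rw [bern, PMF.toMeasure_apply_singleton _ _ (measurableSet_singleton _)]
  simp [PMF.bernoulli_apply, ENNReal.ofReal, ENNReal.coe_min]

lemma measurableSet_all {n : ℕ} (s : Set (EdgeSpace n)) : MeasurableSet s :=
  s.to_countable.measurableSet

lemma edgeMeasure_allTrue {n : ℕ} (p : Fin n → Fin n → ℝ) (T : Finset (Fin n × Fin n)) :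
    edgeMeasure n p {g | ∀ e ∈ T, g e = true}
      = ∏ e ∈ T, min (ENNReal.ofReal (p e.1 e.2)) 1 := by
  have hset : {g : EdgeSpace n | ∀ e ∈ T, g e = true}
      = Set.pi Set.univ (fun c => if c ∈ T then ({true} : Set Bool) else Set.univ) := by
    ext g
    simp only [Set.mem_setOf_eq, Set.mem_pi, Set.mem_univ, forall_true_left]
    constructor
    · intro h c
      by_cases hc : c ∈ T
      · simp [hc, h c hc]
      · simp [hc]
    · intro h e he
      have := h e
      simpa [he] using this
  rw [edgeMeasure, hset, Measure.pi_pi]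
  have hv : ∀ c : Fin n × Fin n,
      bern (p c.1 c.2) (if c ∈ T then ({true} : Set Bool) else Set.univ)
        = if c ∈ T then min (ENNReal.ofReal (p c.1 c.2)) 1 else 1 := by
    intro c
    by_cases hc : c ∈ T
    · simp only [if_pos hc, bern_apply_true]
    · simp only [if_neg hc]; exact measure_univ
  simp_rw [hv]
  rw [Finset.prod_ite_mem, Finset.univ_inter]

lemma card_ltPairs_le {n : ℕ} (S : Finset (Fin n)) :
    ((S ×ˢ S).filter fun e => e.1 < e.2).card ≤ S.card.choose 2 := by
  rw [← Finset.card_powersetCard 2 S]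
  apply Finset.card_le_card_of_injOn (fun e => ({e.1, e.2} : Finset (Fin n)))
  · intro e he
    rw [Finset.mem_coe, Finset.mem_filter, Finset.mem_product] at he
    refine Finset.mem_powersetCard.mpr ⟨?_, Finset.card_pair (ne_of_lt he.2)⟩
    intro x hx
    rcases Finset.mem_insert.mp hx with h | h
    · exact h ▸ he.1.1
    · exact (Finset.mem_singleton.mp h) ▸ he.1.2
  · intro e1 h1 e2 h2 heq
    rw [Finset.mem_coe, Finset.mem_filter] at h1 h2
    have hset : ({e1.1, e1.2} : Set (Fin n)) = {e2.1, e2.2} := by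
      have := congrArg (fun s : Finset (Fin n) => (s : Set (Fin n))) heq
      simpa using this
    rcases Set.pair_eq_pair_iff.mp hset with ⟨ha, hb⟩ | ⟨ha, hb⟩
    · exact Prod.ext ha hb
    · exfalso
      have : e1.1 < e1.1 := by
        calc e1.1 < e1.2 := h1.2
          _ = e2.1 := hb
          _ < e2.2 := h2.2
          _ = e1.1 := ha.symm
      exact lt_irrefl _ this


lemma measure_manyEdges_le {n : ℕ} (p : Fin n → Fin n → ℝ) (b : ℝ) (hb : 0 ≤ b)
    (hpb : ∀ i j, p i j ≤ b) (S : Finset (Fin n)) :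
    edgeMeasure n p {g | 2 * S.card <
        ((S ×ˢ S).filter fun e => e.1 < e.2 ∧ adjOf g e.1 e.2).card}
      ≤ (Nat.choose (S.card.choose 2) (2 * S.card + 1) : ℝ≥0∞)
          * (ENNReal.ofReal b)^(2*S.card+1) := by
  classical
  set D := (S ×ˢ S).filter fun e => e.1 < e.2 with hDdef
  have hD : D.card ≤ S.card.choose 2 := card_ltPairs_le S
  have hsub : {g : EdgeSpace n | 2 * S.card <
        ((S ×ˢ S).filter fun e => e.1 < e.2 ∧ adjOf g e.1 e.2).card}
      ⊆ ⋃ T ∈ D.powersetCard (2*S.card+1), {g : EdgeSpace n | ∀ e ∈ T, g e = true} := by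
    intro g hg
    simp only [Set.mem_setOf_eq] at hg
    have hEq : ((S ×ˢ S).filter fun e => e.1 < e.2 ∧ adjOf g e.1 e.2)
        = D.filter (fun e => adjOf g e.1 e.2) := by
      rw [hDdef, Finset.filter_filter]
    have hcard : 2*S.card+1 ≤ (D.filter fun e => adjOf g e.1 e.2).card := by
      rw [hEq] at hg; omega
    obtain ⟨T, hTsub, hTcard⟩ := Finset.exists_subset_card_eq hcard
    refine Set.mem_iUnion₂.mpr ⟨T, ?_, ?_⟩
    · exact Finset.mem_powersetCard.mpr ⟨hTsub.trans (Finset.filter_subset _ _), hTcard⟩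
    · intro e he
      have he' := hTsub he
      rw [Finset.mem_filter] at he'
      have hlt : e.1 < e.2 := (Finset.mem_filter.mp he'.1).2
      have hadj := he'.2.2
      rwa [eidx, if_pos hlt.le] at hadj
  calc edgeMeasure n p _ ≤ edgeMeasure n p
        (⋃ T ∈ D.powersetCard (2*S.card+1), {g : EdgeSpace n | ∀ e ∈ T, g e = true}) :=
        measure_mono hsub
    _ ≤ ∑ T ∈ D.powersetCard (2*S.card+1),
          edgeMeasure n p {g : EdgeSpace n | ∀ e ∈ T, g e = true} :=
        measure_biUnion_finset_le _ _
    _ ≤ ∑ T ∈ D.powersetCard (2*S.card+1), (ENNReal.ofReal b)^(2*S.card+1) := by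
        refine Finset.sum_le_sum ?_
        intro T hT
        rw [edgeMeasure_allTrue]
        have hTc : T.card = 2*S.card+1 := (Finset.mem_powersetCard.mp hT).2
        calc ∏ e ∈ T, min (ENNReal.ofReal (p e.1 e.2)) 1
            ≤ ∏ _e ∈ T, ENNReal.ofReal b := by
              refine Finset.prod_le_prod' ?_
              intro e _
              exact le_trans (min_le_left _ _) (ENNReal.ofReal_le_ofReal (hpb _ _))
          _ = (ENNReal.ofReal b)^(2*S.card+1) := by
              rw [Finset.prod_const, hTc]
    _ ≤ (Nat.choose (S.card.choose 2) (2 * S.card + 1) : ℝ≥0∞)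
          * (ENNReal.ofReal b)^(2*S.card+1) := by
        rw [Finset.sum_const, Finset.card_powersetCard, nsmul_eq_mul]
        refine mul_le_mul_left ?_ _
        exact_mod_cast Nat.cast_le.mpr (Nat.choose_le_choose _ hD)


def rconst : ℝ := 3 * Real.exp 3 / 64

lemma rconst_nonneg : 0 ≤ rconst := by
  unfold rconst; positivity

lemma rconst_lt_one : rconst < 1 := by
  unfold rconst
  have h : Real.exp 3 < 2.7182818286^3 := by
    rw [show (3:ℝ) = ((3:ℕ):ℝ) by norm_num, ← Real.exp_one_pow]
    exact pow_lt_pow_left₀ Real.exp_one_lt_d9 (Real.exp_pos 1).le (by norm_num)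
  nlinarith

def Kconst : ℝ := ∑' s : ℕ, (s:ℝ)^2 * rconst ^ s

lemma Kconst_summable : Summable fun s : ℕ => (s:ℝ)^2 * rconst^s := by
  have h := summable_pow_mul_geometric_of_norm_lt_one (R := ℝ) 2
    (r := rconst) (by rw [Real.norm_eq_abs, abs_of_nonneg rconst_nonneg]; exact rconst_lt_one)
  exact h

lemma Kconst_nonneg : 0 ≤ Kconst := by
  refine tsum_nonneg fun s => ?_
  have := rconst_nonneg; positivity

lemma key_real (n m : ℕ) (hn : 1 ≤ n) (γ : ℝ) (hγ : 0 < γ)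
    (hm : (m:ℝ) * γ^2 ≤ 3/4 * n) :
    (n.choose m : ℝ) * ((Nat.choose (m.choose 2) (2*m+1) : ℝ) * (γ/n)^(2*m+1))
      ≤ Real.exp 1 * γ / (2*n) * ((m:ℝ)^2 * rconst^m) := by
  by_cases hm0 : m = 0
  · subst hm0
    norm_num
  have hm1 : 1 ≤ m := Nat.one_le_iff_ne_zero.mpr hm0
  have hn0 : (0:ℝ) < n := by exact_mod_cast Nat.pos_of_ne_zero (by omega)
  have hnne : (n:ℝ) ≠ 0 := hn0.ne'
  have hyn : (0:ℝ) ≤ γ / n := div_nonneg hγ.le hn0.le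
  set F1 : ℝ := (Nat.factorial m : ℝ) with hF1
  set F2 : ℝ := (Nat.factorial (2*m+1) : ℝ) with hF2
  have hF1pos : 0 < F1 := by rw [hF1]; exact_mod_cast Nat.factorial_pos m
  have hF2pos : 0 < F2 := by rw [hF2]; exact_mod_cast Nat.factorial_pos (2*m+1)
  set y : ℝ := (m:ℝ)^2*γ/(2*n) with hy
  have hy0 : (0:ℝ) ≤ y := by
    rw [hy]; exact div_nonneg (mul_nonneg (by positivity) hγ.le) (by positivity)
  -- choose bounds
  have hc2 : (Nat.choose m 2 : ℝ) ≤ (m:ℝ)^2/2 := by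
    rw [Nat.choose_two_right]
    have h1 : ((m*(m-1)/2 : ℕ):ℝ) ≤ ((m*(m-1) : ℕ):ℝ)/((2:ℕ):ℝ) := Nat.cast_div_le
    have h2 : ((m*(m-1):ℕ):ℝ) ≤ ((m*m:ℕ):ℝ) := by
      exact_mod_cast Nat.mul_le_mul_left m (Nat.sub_le m 1)
    have h3 : ((m*m:ℕ):ℝ) = (m:ℝ)^2 := by push_cast; ring
    have h4 : ((2:ℕ):ℝ) = 2 := by norm_num
    rw [h4] at h1
    calc ((m*(m-1)/2 : ℕ):ℝ) ≤ ((m*(m-1) : ℕ):ℝ)/2 := h1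
      _ ≤ ((m*m:ℕ):ℝ)/2 := by linarith
      _ = (m:ℝ)^2/2 := by rw [h3]
  have hA : (n.choose m : ℝ) ≤ (n:ℝ)^m / F1 := by
    exact Nat.choose_le_pow_div (α := ℝ) m n
  have hB : (Nat.choose (m.choose 2) (2*m+1) : ℝ) ≤ ((m:ℝ)^2/2)^(2*m+1) / F2 := by
    refine le_trans (Nat.choose_le_pow_div (2*m+1) (m.choose 2)) ?_
    gcongr
  have hBy : (Nat.choose (m.choose 2) (2*m+1) : ℝ) * (γ/n)^(2*m+1)
      ≤ ((m:ℝ)^2/2*(γ/n))^(2*m+1) / F2 := by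
    calc (Nat.choose (m.choose 2) (2*m+1) : ℝ) * (γ/n)^(2*m+1)
        ≤ ((m:ℝ)^2/2)^(2*m+1) / F2 * (γ/n)^(2*m+1) :=
          mul_le_mul_of_nonneg_right hB (pow_nonneg hyn _)
      _ = ((m:ℝ)^2/2*(γ/n))^(2*m+1) / F2 := by
          rw [div_mul_eq_mul_div, ← mul_pow]
  -- the middle power bound
  have hZ : (n:ℝ) * ((m:ℝ)^4*γ^2/(4*(n:ℝ)^2)) ≤ 3/16 * (m:ℝ)^3 := by
    have h1 : (n:ℝ) * ((m:ℝ)^4*γ^2/(4*(n:ℝ)^2)) = ((m:ℝ)*γ^2) * ((m:ℝ)^3/(4*n)) := by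
      field_simp
    rw [h1]
    calc ((m:ℝ)*γ^2) * ((m:ℝ)^3/(4*n)) ≤ (3/4*(n:ℝ)) * ((m:ℝ)^3/(4*n)) := by
          apply mul_le_mul_of_nonneg_right hm (by positivity)
      _ = 3/16 * (m:ℝ)^3 := by field_simp; ring
  have hmid : (n:ℝ)^m * ((m:ℝ)^2/2*(γ/n))^(2*m+1)
      ≤ ((3:ℝ)/16)^m * (m:ℝ)^(3*m) * y := by
    have hyy : (m:ℝ)^2/2*(γ/n) = y := by rw [hy]; ring
    rw [hyy]
    have e2 : y^(2*m+1) = ((m:ℝ)^4*γ^2/(4*(n:ℝ)^2))^m * y := by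
      rw [pow_succ, pow_mul]
      congr 2
      rw [hy]; ring
    rw [e2, ← mul_assoc]
    refine mul_le_mul_of_nonneg_right ?_ hy0
    calc (n:ℝ)^m * ((m:ℝ)^4*γ^2/(4*(n:ℝ)^2))^m
        = ((n:ℝ) * ((m:ℝ)^4*γ^2/(4*(n:ℝ)^2)))^m := (mul_pow _ _ _).symm
      _ ≤ (3/16*(m:ℝ)^3)^m := by
          refine pow_le_pow_left₀ ?_ hZ m
          have h0 : (0:ℝ) ≤ (m:ℝ)^4*γ^2/(4*(n:ℝ)^2) := by positivity
          positivity
      _ = ((3:ℝ)/16)^m * (m:ℝ)^(3*m) := by rw [mul_pow, pow_mul]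
  -- factorial bound
  have h4 : (4:ℝ)^m * (m:ℝ)^(3*m) ≤ Real.exp (3*(m:ℝ)+1) * (F1 * F2) := by
    have hAf := pow_le_exp_mul_factorial m
    have hBf := pow_le_exp_mul_factorial (2*m+1)
    have hcast : ((2*m+1 : ℕ):ℝ) = 2*(m:ℝ)+1 := by push_cast; ring
    have hBfin : (4:ℝ)^m * (m:ℝ)^(2*m) ≤ Real.exp (2*(m:ℝ)+1) * F2 := by
      have h1 : (4:ℝ)^m * (m:ℝ)^(2*m) = (2*(m:ℝ))^(2*m) := by
        rw [mul_pow]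
        congr 1
        rw [show (4:ℝ) = 2^2 by norm_num, ← pow_mul]
      have h2 : (2*(m:ℝ))^(2*m) ≤ (2*(m:ℝ)+1)^(2*m+1) := by
        calc (2*(m:ℝ))^(2*m) ≤ (2*(m:ℝ)+1)^(2*m) :=
              pow_le_pow_left₀ (by positivity) (by linarith) _
          _ ≤ (2*(m:ℝ)+1)^(2*m+1) := by
              refine pow_le_pow_right₀ ?_ (by omega)
              have : (1:ℝ) ≤ (m:ℝ) := by exact_mod_cast hm1
              linarith
      calc (4:ℝ)^m*(m:ℝ)^(2*m) = (2*(m:ℝ))^(2*m) := h1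
        _ ≤ (2*(m:ℝ)+1)^(2*m+1) := h2
        _ = ((2*m+1:ℕ):ℝ)^(2*m+1) := by rw [hcast]
        _ ≤ Real.exp ((2*m+1:ℕ)) * F2 := hBf
        _ = Real.exp (2*(m:ℝ)+1) * F2 := by rw [hcast]
    calc (4:ℝ)^m * (m:ℝ)^(3*m) = (m:ℝ)^m * ((4:ℝ)^m * (m:ℝ)^(2*m)) := by
          rw [show 3*m = m+2*m from by ring, pow_add]; ring
      _ ≤ (Real.exp m * F1) * (Real.exp (2*(m:ℝ)+1) * F2) := by
          refine mul_le_mul hAf hBfin ?_ ?_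
          · positivity
          · positivity
      _ = Real.exp (3*(m:ℝ)+1) * (F1 * F2) := by
          rw [mul_mul_mul_comm, ← Real.exp_add,
            show (m:ℝ) + (2*(m:ℝ)+1) = 3*(m:ℝ)+1 from by ring]
  -- final assembly
  have hdiv : (4:ℝ)^m * (m:ℝ)^(3*m)/(F1*F2) ≤ Real.exp (3*(m:ℝ)+1) :=
    (div_le_iff₀ (by positivity)).mpr h4
  have hrhs : Real.exp 1 * γ/(2*(n:ℝ)) * ((m:ℝ)^2 * rconst^m)
      = Real.exp (3*(m:ℝ)+1) * ((3:ℝ)/64)^m * y := by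
    rw [rconst, show (3*Real.exp 3/64 : ℝ) = (3/64)*Real.exp 3 from by ring, mul_pow,
      show (Real.exp 3)^m = Real.exp ((m:ℕ)*(3:ℝ)) from (Real.exp_nat_mul 3 m).symm]
    rw [show Real.exp (3*(m:ℝ)+1) = Real.exp 1 * Real.exp ((m:ℕ)*(3:ℝ)) from by
      rw [← Real.exp_add]; congr 1; push_cast; ring]
    rw [hy]; ring
  calc (n.choose m : ℝ) * ((Nat.choose (m.choose 2) (2*m+1) : ℝ) * (γ/n)^(2*m+1))
      ≤ ((n:ℝ)^m / F1) * (((m:ℝ)^2/2*(γ/n))^(2*m+1) / F2) := by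
        refine mul_le_mul hA hBy ?_ ?_
        · exact mul_nonneg (Nat.cast_nonneg _) (pow_nonneg hyn _)
        · positivity
    _ = (n:ℝ)^m * ((m:ℝ)^2/2*(γ/n))^(2*m+1) / (F1 * F2) := by
        rw [div_mul_div_comm]
    _ ≤ ((3:ℝ)/16)^m * (m:ℝ)^(3*m) * y / (F1*F2) := by
        exact div_le_div_of_nonneg_right hmid (by positivity)
    _ = ((4:ℝ)^m * (m:ℝ)^(3*m)/(F1*F2)) * (((3:ℝ)/64)^m * y) := by
        rw [show ((3:ℝ)/16) = 4*(3/64) from by norm_num, mul_pow]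
        ring
    _ ≤ Real.exp (3*(m:ℝ)+1) * (((3:ℝ)/64)^m * y) := by
        refine mul_le_mul_of_nonneg_right hdiv ?_
        exact mul_nonneg (by positivity) hy0
    _ = Real.exp 1 * γ / (2*n) * ((m:ℝ)^2 * rconst^m) := by
        rw [hrhs]; ring


lemma measure_bad_le {n : ℕ} (hn : 1 ≤ n) (p : Fin n → Fin n → ℝ) (γ : ℝ) (hγ : 0 < γ)
    (hpmax : ∀ i j, p i j ≤ γ / n) :
    edgeMeasure n p {g | ∃ S : Finset (Fin n), (S.card : ℝ) ≤ 3/(4*γ^2)*n ∧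
        2 * S.card < ((S ×ˢ S).filter fun e => e.1 < e.2 ∧ adjOf g e.1 e.2).card}
      ≤ ENNReal.ofReal (Real.exp 1 * γ / (2*n) * Kconst) := by
  classical
  have hn0 : (0:ℝ) < n := by exact_mod_cast Nat.pos_of_ne_zero (by omega)
  have hb : (0:ℝ) ≤ γ/n := div_nonneg hγ.le hn0.le
  set P := Finset.univ.powerset.filter
    (fun S : Finset (Fin n) => (S.card:ℝ) ≤ 3/(4*γ^2)*n) with hP
  set f : ℕ → ℝ := fun s => (Nat.choose (s.choose 2) (2*s+1) : ℝ) * (γ/n)^(2*s+1) with hf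
  have hf0 : ∀ s, 0 ≤ f s := fun s =>
    mul_nonneg (Nat.cast_nonneg _) (pow_nonneg hb _)
  have hsub : {g : EdgeSpace n | ∃ S : Finset (Fin n), (S.card : ℝ) ≤ 3/(4*γ^2)*n ∧
        2 * S.card < ((S ×ˢ S).filter fun e => e.1 < e.2 ∧ adjOf g e.1 e.2).card}
      ⊆ ⋃ S ∈ P, {g : EdgeSpace n |
          2 * S.card < ((S ×ˢ S).filter fun e => e.1 < e.2 ∧ adjOf g e.1 e.2).card} := by
    rintro g ⟨S, hc, hlt⟩
    exact Set.mem_iUnion₂.mpr ⟨S, Finset.mem_filter.mpr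
      ⟨Finset.mem_powerset.mpr (Finset.subset_univ S), hc⟩, hlt⟩
  calc edgeMeasure n p _
      ≤ edgeMeasure n p (⋃ S ∈ P, {g : EdgeSpace n |
          2 * S.card < ((S ×ˢ S).filter fun e => e.1 < e.2 ∧ adjOf g e.1 e.2).card}) :=
        measure_mono hsub
    _ ≤ ∑ S ∈ P, edgeMeasure n p {g : EdgeSpace n |
          2 * S.card < ((S ×ˢ S).filter fun e => e.1 < e.2 ∧ adjOf g e.1 e.2).card} :=
        measure_biUnion_finset_le _ _
    _ ≤ ∑ S ∈ P, ENNReal.ofReal (f S.card) := by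
        refine Finset.sum_le_sum ?_
        intro S _
        refine le_trans (measure_manyEdges_le p (γ/n) hb (fun i j => hpmax i j) S) ?_
        rw [hf]
        rw [← ENNReal.ofReal_pow hb, ← ENNReal.ofReal_natCast,
          ← ENNReal.ofReal_mul (Nat.cast_nonneg _)]
    _ = ENNReal.ofReal (∑ S ∈ P, f S.card) :=
        (ENNReal.ofReal_sum_of_nonneg (fun S _ => hf0 _)).symm
    _ ≤ ENNReal.ofReal (Real.exp 1 * γ / (2*n) * Kconst) := by
        refine ENNReal.ofReal_le_ofReal ?_
        -- real estimate
        set fhat : ℕ → ℝ := fun s => if (s:ℝ) ≤ 3/(4*γ^2)*n then f s else 0 with hfhat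
        have hfhat0 : ∀ s, 0 ≤ fhat s := by
          intro s; rw [hfhat]; dsimp only
          split
          · exact hf0 s
          · exact le_refl 0
        have hc1 : (0:ℝ) ≤ Real.exp 1 * γ / (2*n) :=
          div_nonneg (mul_nonneg (Real.exp_pos 1).le hγ.le) (by positivity)
        have hstep1 : ∑ S ∈ P, f S.card = ∑ S ∈ P, fhat S.card := by
          refine Finset.sum_congr rfl ?_
          intro S hS
          rw [hP, Finset.mem_filter] at hS
          rw [hfhat]; dsimp only; rw [if_pos hS.2]
        have hstep2 : ∑ S ∈ P, fhat S.card
            ≤ ∑ S ∈ (Finset.univ : Finset (Fin n)).powerset, fhat S.card := by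
          refine Finset.sum_le_sum_of_subset_of_nonneg (Finset.filter_subset _ _) ?_
          intro S _ _; exact hfhat0 _
        have hstep3 : ∑ S ∈ (Finset.univ : Finset (Fin n)).powerset, fhat S.card
            = ∑ m ∈ Finset.range (n+1), (n.choose m) • fhat m := by
          rw [Finset.sum_powerset_apply_card]
          simp
        have hstep4 : ∑ m ∈ Finset.range (n+1), (n.choose m) • fhat m
            ≤ ∑ m ∈ Finset.range (n+1),
                Real.exp 1 * γ / (2*n) * ((m:ℝ)^2 * rconst^m) := by
          refine Finset.sum_le_sum ?_
          intro m _
          rw [nsmul_eq_mul, hfhat]; dsimp only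
          by_cases hcond : (m:ℝ) ≤ 3/(4*γ^2)*n
          · rw [if_pos hcond, hf]
            refine key_real n m hn γ hγ ?_
            have hγ2 : (0:ℝ) < γ^2 := by positivity
            calc (m:ℝ)*γ^2 ≤ (3/(4*γ^2)*n)*γ^2 :=
                  mul_le_mul_of_nonneg_right hcond hγ2.le
              _ = 3/4*n := by field_simp
          · rw [if_neg hcond, mul_zero]
            exact mul_nonneg hc1
              (mul_nonneg (by positivity) (pow_nonneg rconst_nonneg _))
        have hstep5 : ∑ m ∈ Finset.range (n+1),
              Real.exp 1 * γ / (2*n) * ((m:ℝ)^2 * rconst^m)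
            ≤ Real.exp 1 * γ / (2*n) * Kconst := by
          rw [← Finset.mul_sum]
          refine mul_le_mul_of_nonneg_left ?_ hc1
          exact Summable.sum_le_tsum _
            (fun m _ => mul_nonneg (by positivity) (pow_nonneg rconst_nonneg _))
            Kconst_summable
        calc ∑ S ∈ P, f S.card = ∑ S ∈ P, fhat S.card := hstep1
          _ ≤ ∑ S ∈ (Finset.univ : Finset (Fin n)).powerset, fhat S.card := hstep2
          _ = ∑ m ∈ Finset.range (n+1), (n.choose m) • fhat m := hstep3
          _ ≤ ∑ m ∈ Finset.range (n+1),
                Real.exp 1 * γ / (2*n) * ((m:ℝ)^2 * rconst^m) := hstep4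
          _ ≤ Real.exp 1 * γ / (2*n) * Kconst := hstep5

end GraphMatching
end

open GraphMatching in
/-- Lemma 5, Łuczak-type subgraph density bound:
if `γ_n/√n → 0` and `p_max(n) ≤ γ_n/n`, then w.h.p. every `S ⊆ [n]` with
`|S| ≤ (3/(4γ_n²)) n` spans at most `2|S|` edges. -/
theorem small_subgraph_density
    (p : ∀ n, Fin n → Fin n → ℝ)
    (hsym : ∀ n i j, p n i j = p n j i)
    (hp0 : ∀ n i j, 0 ≤ p n i j) (hp1 : ∀ n i j, p n i j ≤ 1)
    (hdiag : ∀ n i, p n i i = 0)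
    (γ : ℕ → ℝ) (hγpos : ∀ n, 0 < γ n)
    (hγ : Tendsto (fun n => γ n / Real.sqrt n) atTop (nhds 0))
    (hpmax : ∀ n i j, p n i j ≤ γ n / n) :
    Tendsto
      (fun n => edgeMeasure n (p n)
        {g | ∀ S : Finset (Fin n),
          (S.card : ℝ) ≤ 3 / (4 * γ n ^ 2) * n →
            ((S ×ˢ S).filter fun e => e.1 < e.2 ∧ adjOf g e.1 e.2).card ≤ 2 * S.card})
      atTop (nhds 1) := by
  classical
  set Bad : (n : ℕ) → Set (EdgeSpace n) := fun n =>
    {g | ∃ S : Finset (Fin n), (S.card : ℝ) ≤ 3/(4*γ n^2)*n ∧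
      2 * S.card < ((S ×ˢ S).filter fun e => e.1 < e.2 ∧ adjOf g e.1 e.2).card} with hBad
  have hset : ∀ n, {g : EdgeSpace n | ∀ S : Finset (Fin n),
        (S.card : ℝ) ≤ 3 / (4 * γ n ^ 2) * n →
        ((S ×ˢ S).filter fun e => e.1 < e.2 ∧ adjOf g e.1 e.2).card ≤ 2 * S.card}
      = (Bad n)ᶜ := by
    intro n; ext g
    simp only [hBad, Set.mem_setOf_eq, Set.mem_compl_iff, not_exists, not_and, not_lt]
  have hμ : ∀ n, edgeMeasure n (p n) ((Bad n)ᶜ) = 1 - edgeMeasure n (p n) (Bad n) := by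
    intro n
    rw [measure_compl (measurableSet_all _) (measure_ne_top _ _), measure_univ]
  have hb0 : Tendsto (fun n => edgeMeasure n (p n) (Bad n)) atTop (nhds 0) := by
    have hγn : Tendsto (fun n : ℕ => γ n / n) atTop (nhds 0) := by
      refine tendsto_of_tendsto_of_tendsto_of_le_of_le' tendsto_const_nhds hγ ?_ ?_
      · exact Eventually.of_forall fun n => div_nonneg (hγpos n).le (Nat.cast_nonneg n)
      · filter_upwards [eventually_ge_atTop 1] with n hn
        have h1 : (1:ℝ) ≤ (n:ℝ) := by exact_mod_cast hn
        have hs0 : 0 < Real.sqrt n := Real.sqrt_pos.mpr (by linarith)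
        have hsle : Real.sqrt n ≤ n := by
          calc Real.sqrt n ≤ Real.sqrt ((n:ℝ)^2) := Real.sqrt_le_sqrt (by nlinarith)
            _ = n := Real.sqrt_sq (by linarith)
        gcongr
        exact (hγpos n).le
    have hreal : Tendsto (fun n : ℕ => Real.exp 1 * γ n / (2*(n:ℝ)) * Kconst)
        atTop (nhds 0) := by
      have heq : (fun n : ℕ => Real.exp 1 * γ n / (2*(n:ℝ)) * Kconst)
          = fun n : ℕ => (Real.exp 1 * Kconst / 2) * (γ n / n) := by
        funext n; ring
      rw [heq]
      have h2 := hγn.const_mul (Real.exp 1 * Kconst / 2)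
      simpa using h2
    refine tendsto_of_tendsto_of_tendsto_of_le_of_le'
      (g := fun _ => (0:ℝ≥0∞))
      (h := fun n => ENNReal.ofReal (Real.exp 1 * γ n / (2*(n:ℝ)) * Kconst))
      tendsto_const_nhds ?_ ?_ ?_
    · have h3 := ENNReal.tendsto_ofReal hreal
      simpa using h3
    · exact Eventually.of_forall fun n => zero_le
    · filter_upwards [eventually_ge_atTop 1] with n hn
      exact measure_bad_le hn (p n) (γ n) (hγpos n) (fun i j => hpmax n i j)
  have hfinal : Tendsto (fun n => (1:ℝ≥0∞) - edgeMeasure n (p n) (Bad n))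
      atTop (nhds 1) := by
    have hc := (ENNReal.continuous_sub_left (a := 1) ENNReal.one_ne_top).tendsto 0
    have h4 := hc.comp hb0
    simpa [Function.comp_def] using h4
  refine Tendsto.congr (fun n => ?_) hfinal
  rw [hset n, hμ n]
end

section
/- Let (G_1, G_2) ~ CIRG(p, s), let π be a fixed permutation of [n], and condition on the event π_* = π. Let (M, μ) be any matching such that |{i ∈ M : μ(i) ≠ π(i)}| = d with d ≥ 1, define f(μ) := Σ_{i∈M : μ(i)≠π(i)} deg_{G_1∧_μ G_2}(i), and let k be a positive integer. Then for any θ > 0, P(f(μ) ≥ kd | π_* = π) ≤ 3 exp{ −d (θk − e^{2θ} p_max s² − n e^{6θ} p_max² s²) }. -/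
open MeasureTheory ProbabilityTheory Filter Real
open scoped ENNReal Classical

noncomputable section

namespace GraphMatching

variable {n : ℕ}

instance (n : ℕ) : MeasurableSpace (Equiv.Perm (Fin n)) := ⊤

/-- Sample space of the correlated model: (parent edges, subsampling mask for `G₁`,
subsampling mask for `G₂'`) together with the random relabeling permutation. -/
abbrev Omega (n : ℕ) := (EdgeSpace n × EdgeSpace n × EdgeSpace n) × Equiv.Perm (Fin n)

/-- The law of the correlated inhomogeneous random graph model `CIRG(p, s)`:
independent parent graph `G(p)`, two independent i.i.d.-`Bern(s)` subsampling masks,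
and an independent uniformly random permutation. -/
def CIRG (n : ℕ) (p : Fin n → Fin n → ℝ) (s : ℝ) : Measure (Omega n) :=
  ((edgeMeasure n p).prod
      ((edgeMeasure n fun _ _ => s).prod (edgeMeasure n fun _ _ => s))).prod
    (PMF.uniformOfFintype (Equiv.Perm (Fin n))).toMeasure

/-- Edge relation of the parent graph `G`. -/
def parentE (ω : Omega n) (i j : Fin n) : Prop := i ≠ j ∧ ω.1.1 (eidx i j) = true

/-- Edge relation of `G₁` (parent edges kept by the first mask). -/
def g1E (ω : Omega n) (i j : Fin n) : Prop := parentE ω i j ∧ ω.1.2.1 (eidx i j) = true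

/-- Edge relation of `G₂'` (parent edges kept by the second mask). -/
def g2'E (ω : Omega n) (i j : Fin n) : Prop := parentE ω i j ∧ ω.1.2.2 (eidx i j) = true

/-- Edge relation of `G₂`, obtained from `G₂'` by relabeling vertices via `π⋆ = ω.2`. -/
def g2E (ω : Omega n) (a b : Fin n) : Prop := g2'E ω (ω.2.symm a) (ω.2.symm b)

/-- The ground-truth permutation `π⋆`. -/
def piStar (ω : Omega n) : Equiv.Perm (Fin n) := ω.2

/-- Degree of `i` in the intersection graph `G₁ ∧_μ G₂` of the matching `(M, μ)`. -/
def interDeg (ω : Omega n) (M : Finset (Fin n)) (μ : Fin n → Fin n) (i : Fin n) : ℕ :=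
  (M.filter fun j => g1E ω i j ∧ g2E ω (μ i) (μ j)).card

/-- `(M, μ)` is a `k`-core matching: `μ` is injective on `M` and every vertex of the
intersection graph `G₁ ∧_μ G₂` has degree at least `k` there. -/
def IsKCoreMatching (ω : Omega n) (k : ℕ) (M : Finset (Fin n)) (μ : Fin n → Fin n) : Prop :=
  Set.InjOn μ M ∧ ∀ i ∈ M, k ≤ interDeg ω M μ i

/-- `(M, μ)` is a maximum-cardinality `k`-core matching. -/
def IsMaxKCoreMatching (ω : Omega n) (k : ℕ) (M : Finset (Fin n)) (μ : Fin n → Fin n) : Prop :=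
  IsKCoreMatching ω k M μ ∧ ∀ M' μ', IsKCoreMatching ω k M' μ' → M'.card ≤ M.card

/-- Vertex set of the `k`-core of the graph with adjacency relation `A`:
the union of all vertex sets inducing a subgraph of minimum degree at least `k`. -/
def coreVerts (n k : ℕ) (A : Fin n → Fin n → Prop) : Finset (Fin n) :=
  Finset.univ.filter fun i => ∃ S : Finset (Fin n), i ∈ S ∧
    ∀ v ∈ S, k ≤ (S.filter fun j => A v j).card

/-- Adjacency relation of the intersection graph `G₁ ∧_{π⋆} G₂` on all of `[n]`. -/
def interAdj (ω : Omega n) (i j : Fin n) : Prop := g1E ω i j ∧ g2E ω (ω.2 i) (ω.2 j)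

end GraphMatching

end

noncomputable section
namespace GMAux

lemma measAll {α : Type*} [Countable α] [MeasurableSpace α] [MeasurableSingletonClass α]
    (S : Set α) : MeasurableSet S := S.to_countable.measurableSet

variable {κ : Type*} [Fintype κ]

lemma pi_forall_true (ν : κ → Measure Bool) [∀ c, IsProbabilityMeasure (ν c)] (K : Finset κ) :
    Measure.pi ν {y | ∀ c ∈ K, y c = true} = ∏ c ∈ K, ν c {true} := by
  have hset : {y : κ → Bool | ∀ c ∈ K, y c = true}
      = Set.pi Set.univ (fun c => if c ∈ K then ({true} : Set Bool) else Set.univ) := by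
    ext y
    simp only [Set.mem_setOf_eq, Set.mem_pi, Set.mem_univ, forall_true_left]
    constructor
    · intro h c
      by_cases hc : c ∈ K
      · rw [if_pos hc]; exact h c hc
      · rw [if_neg hc]; trivial
    · intro h c hc
      have := h c; rw [if_pos hc] at this; exact this
  rw [hset, Measure.pi_pi]
  have hval : ∀ c : κ, ν c (if c ∈ K then ({true} : Set Bool) else Set.univ)
      = if c ∈ K then ν c {true} else 1 := by
    intro c; by_cases hc : c ∈ K
    · rw [if_pos hc, if_pos hc]
    · rw [if_neg hc, if_neg hc, measure_univ]
  simp_rw [hval]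
  rw [Finset.prod_ite_mem, Finset.univ_inter]

lemma lintegral_mul_of_sep (ν : κ → Measure Bool) [∀ c, IsProbabilityMeasure (ν c)]
    (P : κ → Prop) (F H : (κ → Bool) → ℝ≥0∞)
    (hF : ∀ y y', (∀ c, P c → y c = y' c) → F y = F y')
    (hH : ∀ y y', (∀ c, ¬ P c → y c = y' c) → H y = H y') :
    ∫⁻ y, F y * H y ∂(Measure.pi ν)
      = (∫⁻ y, F y ∂(Measure.pi ν)) * ∫⁻ y, H y ∂(Measure.pi ν) := by
  classical
  set e := MeasurableEquiv.piEquivPiSubtypeProd (fun _ : κ => Bool) P with he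
  have esymm : ∀ (z : ({ c // P c } → Bool) × ({ c // ¬ P c } → Bool)) (c : κ),
      e.symm z c = if h : P c then z.1 ⟨c, h⟩ else z.2 ⟨c, h⟩ := fun z c => rfl
  have hmp := measurePreserving_piEquivPiSubtypeProd ν P
  have hsymm := hmp.symm e
  set F' : ({ c // P c } → Bool) → ℝ≥0∞ := fun u => F (e.symm (u, fun _ => false)) with hF'
  set H' : ({ c // ¬ P c } → Bool) → ℝ≥0∞ := fun v => H (e.symm (fun _ => false, v)) with hH'
  have hFeq : ∀ z : ({ c // P c } → Bool) × ({ c // ¬ P c } → Bool), F (e.symm z) = F' z.1 := by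
    intro z
    apply hF
    intro c hc
    rw [esymm, esymm, dif_pos hc, dif_pos hc]
  have hHeq : ∀ z : ({ c // P c } → Bool) × ({ c // ¬ P c } → Bool), H (e.symm z) = H' z.2 := by
    intro z
    apply hH
    intro c hc
    rw [esymm, esymm, dif_neg hc, dif_neg hc]
  have key : ∀ (G : (κ → Bool) → ℝ≥0∞),
      ∫⁻ y, G y ∂(Measure.pi ν) = ∫⁻ z, G (e.symm z)
        ∂((Measure.pi fun c : {c // P c} => ν c).prod (Measure.pi fun c : {c // ¬ P c} => ν c)) := by
    intro G
    exact (hsymm.lintegral_comp (measurable_of_countable G)).symm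
  rw [key (fun y => F y * H y), key F, key H]
  have hsplit : ∀ z : ({ c // P c } → Bool) × ({ c // ¬ P c } → Bool),
      F (e.symm z) * H (e.symm z) = F' z.1 * H' z.2 := fun z => by rw [hFeq, hHeq]
  simp_rw [hsplit, hFeq, hHeq]
  rw [lintegral_prod_mul (measurable_of_countable F').aemeasurable
    (measurable_of_countable H').aemeasurable]
  congr 1
  · have := lintegral_prod_mul (μ := Measure.pi fun c : {c // P c} => ν c)
      (ν := Measure.pi fun c : {c // ¬ P c} => ν c) (f := F') (g := fun _ => (1:ℝ≥0∞))
      (measurable_of_countable _).aemeasurable (measurable_of_countable _).aemeasurable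
    simpa using this.symm
  · have := lintegral_prod_mul (μ := Measure.pi fun c : {c // P c} => ν c)
      (ν := Measure.pi fun c : {c // ¬ P c} => ν c) (f := fun _ => (1:ℝ≥0∞)) (g := H')
      (measurable_of_countable _).aemeasurable (measurable_of_countable _).aemeasurable
    simpa using this.symm

lemma lintegral_prod_blocks (ν : κ → Measure Bool) [∀ c, IsProbabilityMeasure (ν c)]
    {J : Type*} (S : Finset J) (B : J → Finset κ) (G : J → (κ → Bool) → ℝ≥0∞)
    (hdisj : ∀ j ∈ S, ∀ j' ∈ S, j ≠ j' → Disjoint (B j) (B j'))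
    (hdep : ∀ j ∈ S, ∀ y y' : κ → Bool, (∀ c ∈ B j, y c = y' c) → G j y = G j y') :
    ∫⁻ y, ∏ j ∈ S, G j y ∂(Measure.pi ν) = ∏ j ∈ S, ∫⁻ y, G j y ∂(Measure.pi ν) := by
  classical
  induction S using Finset.induction with
  | empty => simp
  | @insert j₀ S hj₀ ih =>
    have hdisj' : ∀ j ∈ S, ∀ j' ∈ S, j ≠ j' → Disjoint (B j) (B j') := by
      intro j hj j' hj' hne
      exact hdisj j (Finset.mem_insert_of_mem hj) j' (Finset.mem_insert_of_mem hj') hne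
    have hdep' : ∀ j ∈ S, ∀ y y' : κ → Bool, (∀ c ∈ B j, y c = y' c) → G j y = G j y' := by
      intro j hj; exact hdep j (Finset.mem_insert_of_mem hj)
    simp only [Finset.prod_insert hj₀]
    rw [← ih hdisj' hdep']
    apply lintegral_mul_of_sep ν (fun c => c ∈ B j₀)
    · intro y y' h
      exact hdep j₀ (Finset.mem_insert_self _ _) y y' (fun c hc => h c hc)
    · intro y y' h
      apply Finset.prod_congr rfl
      intro j hj
      apply hdep' j hj
      intro c hc
      apply h
      intro hcB
      exact (Finset.disjoint_left.mp
        (hdisj j₀ (Finset.mem_insert_self _ _) j (Finset.mem_insert_of_mem hj)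
          (fun heq => hj₀ (heq ▸ hj)))) hcB hc

lemma exists_three_coloring {V : Type*} (Adj : V → V → Prop)
    (hsymm : ∀ u v, Adj u v → Adj v u) (s : Finset V)
    (hdeg : ∀ v, (s.filter (fun u => Adj v u ∧ u ≠ v)).card ≤ 2) :
    ∃ χ : V → Fin 3, ∀ u ∈ s, ∀ v ∈ s, u ≠ v → Adj u v → χ u ≠ χ v := by
  classical
  induction s using Finset.induction with
  | empty => exact ⟨fun _ => 0, by simp⟩
  | @insert a s ha ih =>
    obtain ⟨χ, hχ⟩ := ih (fun v => le_trans (Finset.card_le_card (Finset.filter_subset_filter _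
      (Finset.subset_insert a s))) (hdeg v))
    set nbrs := s.filter (fun u => Adj a u) with hnbrs
    have hcard : nbrs.card ≤ 2 := by
      refine le_trans (Finset.card_le_card ?_) (hdeg a)
      intro u hu
      rw [hnbrs, Finset.mem_filter] at hu
      rw [Finset.mem_filter]
      exact ⟨Finset.mem_insert_of_mem hu.1, hu.2, fun heq => ha (heq ▸ hu.1)⟩
    have : ∃ c : Fin 3, c ∉ nbrs.image χ := by
      by_contra hcon
      push_neg at hcon
      have hsub : (Finset.univ : Finset (Fin 3)) ⊆ nbrs.image χ := fun c _ => hcon c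
      have h3 := Finset.card_le_card hsub
      have h2 : (nbrs.image χ).card ≤ 2 := le_trans Finset.card_image_le hcard
      simp [Finset.card_univ] at h3
      omega
    obtain ⟨c, hc⟩ := this
    refine ⟨Function.update χ a c, ?_⟩
    intro u hu v hv huv hadj
    rcases Finset.mem_insert.mp hu with hu' | hu' <;> rcases Finset.mem_insert.mp hv with hv' | hv'
    · exact absurd (hu'.trans hv'.symm) huv
    · subst hu'
      rw [Function.update_self, Function.update_of_ne (fun heq => ha (by rw [← heq]; exact hv'))]
      intro heq
      apply hc
      rw [heq]
      exact Finset.mem_image_of_mem χ (Finset.mem_filter.mpr ⟨hv', hadj⟩)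
    · subst hv'
      rw [Function.update_self, Function.update_of_ne (fun heq => ha (by rw [← heq]; exact hu'))]
      intro heq
      apply hc
      rw [← heq]
      exact Finset.mem_image_of_mem χ (Finset.mem_filter.mpr ⟨hu', hsymm _ _ hadj⟩)
    · rw [Function.update_of_ne (fun heq => ha (by rw [← heq]; exact hu')),
        Function.update_of_ne (fun heq => ha (by rw [← heq]; exact hv'))]
      exact hχ u hu' v hv' huv hadj

open GraphMatching

variable {n : ℕ}

abbrev EIdx (n : ℕ) := Fin n × Fin n
abbrev Kappa (n : ℕ) := EIdx n ⊕ (EIdx n ⊕ EIdx n)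

def pr (p : Fin n → Fin n → ℝ) (s : ℝ) : Kappa n → ℝ :=
  Sum.elim (fun e => p e.1 e.2) (Sum.elim (fun _ => s) (fun _ => s))

instance bern_prob (p : ℝ) : IsProbabilityMeasure (bern p) :=
  PMF.toMeasure.isProbabilityMeasure _

instance edge_prob (p : Fin n → Fin n → ℝ) : IsProbabilityMeasure (edgeMeasure n p) := by
  unfold edgeMeasure; infer_instance

def rho (n : ℕ) (p : Fin n → Fin n → ℝ) (s : ℝ) : Measure (Kappa n → Bool) :=
  Measure.pi fun c => bern (pr p s c)

instance rho_prob (p : Fin n → Fin n → ℝ) (s : ℝ) : IsProbabilityMeasure (rho n p s) := by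
  unfold rho; infer_instance

def Phi : (Kappa n → Bool) → EdgeSpace n × (EdgeSpace n × EdgeSpace n) := fun y =>
  (fun e => y (.inl e), fun e => y (.inr (.inl e)), fun e => y (.inr (.inr e)))

def alpha (n : ℕ) (p : Fin n → Fin n → ℝ) (s : ℝ) :
    Measure (EdgeSpace n × (EdgeSpace n × EdgeSpace n)) :=
  (edgeMeasure n p).prod ((edgeMeasure n fun _ _ => s).prod (edgeMeasure n fun _ _ => s))

instance alpha_prob (p : Fin n → Fin n → ℝ) (s : ℝ) : IsProbabilityMeasure (alpha n p s) := by
  unfold alpha edgeMeasure; infer_instance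

lemma phi_mp (p : Fin n → Fin n → ℝ) (s : ℝ) :
    MeasurePreserving (Phi (n := n)) (rho n p s) (alpha n p s) := by
  have h1 := ((measurePreserving_sumPiEquivProdPi_symm
      (fun c : (EIdx n) ⊕ (EIdx n ⊕ EIdx n) => bern (pr p s c))).symm
      (MeasurableEquiv.sumPiEquivProdPi (fun _ => Bool)).symm)
  have h2 := ((measurePreserving_sumPiEquivProdPi_symm
      (fun c : (EIdx n) ⊕ (EIdx n) => bern (pr p s (Sum.inr c)))).symm
      (MeasurableEquiv.sumPiEquivProdPi (fun _ => Bool)).symm)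
  have h3 := (MeasurePreserving.id (edgeMeasure n p)).prod h2
  exact h3.comp h1


lemma omega_all_meas (S : Set (Omega n)) : MeasurableSet S := measAll S

lemma cond_apply' (p : Fin n → Fin n → ℝ) (s : ℝ) (π₀ : Equiv.Perm (Fin n))
    (S : Set (Omega n)) :
    (ProbabilityTheory.cond (CIRG n p s) {ω | ω.2 = π₀}) S
      = alpha n p s {x | (x, π₀) ∈ S} := by
  have hu : (PMF.uniformOfFintype (Equiv.Perm (Fin n))).toMeasure {π₀}
      = ((Fintype.card (Equiv.Perm (Fin n)) : ℝ≥0∞))⁻¹ := by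
    rw [PMF.toMeasure_apply_singleton _ _ (measAll _), PMF.uniformOfFintype_apply]
  have hu0 : (PMF.uniformOfFintype (Equiv.Perm (Fin n))).toMeasure {π₀} ≠ 0 := by
    rw [hu]
    simp [Fintype.card_ne_zero]
  have hutop : (PMF.uniformOfFintype (Equiv.Perm (Fin n))).toMeasure {π₀} ≠ ⊤ := by
    rw [hu]
    simp
  have hE : {ω : Omega n | ω.2 = π₀} = Set.univ ×ˢ ({π₀} : Set (Equiv.Perm (Fin n))) := by
    ext ⟨x, y⟩
    simp only [Set.mem_setOf_eq, Set.mem_prod, Set.mem_univ, true_and, Set.mem_singleton_iff]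
  have hES : {ω : Omega n | ω.2 = π₀} ∩ S
      = ({x | (x, π₀) ∈ S}) ×ˢ ({π₀} : Set (Equiv.Perm (Fin n))) := by
    ext ⟨x, y⟩
    simp only [Set.mem_inter_iff, Set.mem_setOf_eq, Set.mem_prod, Set.mem_singleton_iff]
    constructor
    · rintro ⟨rfl, hS⟩; exact ⟨hS, rfl⟩
    · rintro ⟨hS, rfl⟩; exact ⟨rfl, hS⟩
  rw [ProbabilityTheory.cond_apply (measAll _), hES]
  show _ * (CIRG n p s) _ = _
  rw [hE]
  unfold CIRG
  rw [Measure.prod_prod, Measure.prod_prod]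
  show (_ * _)⁻¹ * (alpha n p s _ * _) = _
  rw [measure_univ, one_mul, mul_comm (alpha n p s _), ← mul_assoc,
    ENNReal.inv_mul_cancel hu0 hutop, one_mul]

section Comb
variable {n : ℕ} (π₀ : Equiv.Perm (Fin n)) (M : Finset (Fin n)) (μ : Fin n → Fin n)

def Ef : Finset (Fin n) := M.filter fun i => μ i ≠ π₀ i

def sg : Fin n → Fin n := fun i => π₀.symm (μ i)

def E2 (q : EIdx n) : EIdx n := eidx (sg π₀ μ q.1) (sg π₀ μ q.2)

def PP : Finset (EIdx n) :=
  Finset.univ.filter fun q => q.1 ∈ M ∧ q.2 ∈ M ∧ q.1 < q.2 ∧ (q.1 ∈ Ef π₀ M μ ∨ q.2 ∈ Ef π₀ M μ)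

def Xb (e f : EIdx n) (y : Kappa n → Bool) : Prop :=
  y (.inl e) = true ∧ y (.inl f) = true ∧ y (.inr (.inl e)) = true ∧ y (.inr (.inr f)) = true

def KK (q : EIdx n) : Finset (Kappa n) :=
  {.inl q, .inl (E2 π₀ μ q), .inr (.inl q), .inr (.inr (E2 π₀ μ q))}

def Nind (q : EIdx n) (y : Kappa n → Bool) : ℕ :=
  if Xb q (E2 π₀ μ q) y then 1 else 0

def wt (q : EIdx n) : ℕ :=
  (if q.1 ∈ Ef π₀ M μ then 1 else 0) + (if q.2 ∈ Ef π₀ M μ then 1 else 0)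

lemma eidx_lt {i j : Fin n} (h : i < j) : eidx i j = (i, j) := by
  unfold eidx; rw [if_pos h.le]

lemma eidx_comm (i j : Fin n) : eidx i j = eidx j i := by
  unfold eidx
  rcases lt_trichotomy i j with h | h | h
  · rw [if_pos h.le, if_neg (not_le.mpr h)]
  · subst h; simp
  · rw [if_pos h.le, if_neg (not_le.mpr h)]

lemma eidx_pair (a b : Fin n) : eidx a b = (a, b) ∨ eidx a b = (b, a) := by
  unfold eidx; split
  · exact Or.inl rfl
  · exact Or.inr rfl

lemma mem_Ef {i : Fin n} : i ∈ Ef π₀ M μ ↔ i ∈ M ∧ μ i ≠ π₀ i := Finset.mem_filter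

lemma Ef_subset : Ef π₀ M μ ⊆ M := Finset.filter_subset _ _

lemma mem_PP {q : EIdx n} : q ∈ PP π₀ M μ ↔
    q.1 ∈ M ∧ q.2 ∈ M ∧ q.1 < q.2 ∧ (q.1 ∈ Ef π₀ M μ ∨ q.2 ∈ Ef π₀ M μ) := by
  unfold PP; simp

lemma sg_injOn (hinj : Set.InjOn μ M) : ∀ i ∈ M, ∀ j ∈ M,
    sg π₀ μ i = sg π₀ μ j → i = j := by
  intro i hi j hj h
  exact hinj hi hj (π₀.symm.injective h)

lemma cond_iff (hinj : Set.InjOn μ M) (y : Kappa n → Bool) {i j : Fin n}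
    (hi : i ∈ M) (hj : j ∈ M) :
    (g1E (Phi y, π₀) i j ∧ g2E (Phi y, π₀) (μ i) (μ j)) ↔
      (i ≠ j ∧ Xb (eidx i j) (eidx (sg π₀ μ i) (sg π₀ μ j)) y) := by
  have hσ : (sg π₀ μ i ≠ sg π₀ μ j) ↔ i ≠ j := by
    constructor
    · intro h he; exact h (he ▸ rfl)
    · intro h he; exact h (sg_injOn π₀ M μ hinj i hi j hj he)
  show ((_ ∧ _) ∧ _) ∧ _ ↔ _
  unfold g2E g2'E parentE
  show ((_ ∧ _) ∧ _) ∧ ((_ ∧ _) ∧ _) ↔ _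
  dsimp only [Phi]
  unfold Xb
  rw [show (π₀.symm (μ i)) = sg π₀ μ i from rfl, show (π₀.symm (μ j)) = sg π₀ μ j from rfl]
  tauto

lemma interDeg_eq (hinj : Set.InjOn μ M) (y : Kappa n → Bool) {i : Fin n} (hi : i ∈ M) :
    interDeg (Phi y, π₀) M μ i
      = ∑ j ∈ M, if i ≠ j ∧ Xb (eidx i j) (eidx (sg π₀ μ i) (sg π₀ μ j)) y then 1 else 0 := by
  unfold interDeg
  rw [Finset.card_filter]
  apply Finset.sum_congr rfl
  intro j hj
  congr 1
  · exact propext (cond_iff π₀ M μ hinj y hi hj)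

lemma f_eq (hinj : Set.InjOn μ M) (y : Kappa n → Bool) :
    ∑ i ∈ Ef π₀ M μ, interDeg (Phi y, π₀) M μ i
      = ∑ q ∈ PP π₀ M μ, wt π₀ M μ q * Nind π₀ μ q y := by
  classical
  have hL1 : ∑ i ∈ Ef π₀ M μ, interDeg (Phi y, π₀) M μ i
      = ∑ z ∈ (Ef π₀ M μ) ×ˢ M,
          (if z.1 ≠ z.2 ∧ Xb (eidx z.1 z.2) (eidx (sg π₀ μ z.1) (sg π₀ μ z.2)) y then 1 else 0) := by
    rw [Finset.sum_product]
    apply Finset.sum_congr rfl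
    intro i hi
    exact interDeg_eq π₀ M μ hinj y (Ef_subset π₀ M μ hi)
  set F : EIdx n → ℕ := fun z =>
    if z.1 ≠ z.2 ∧ Xb (eidx z.1 z.2) (eidx (sg π₀ μ z.1) (sg π₀ μ z.2)) y then 1 else 0 with hF
  -- right side splits
  have hR : ∑ q ∈ PP π₀ M μ, wt π₀ M μ q * Nind π₀ μ q y
      = (∑ q ∈ (PP π₀ M μ).filter (fun q => q.1 ∈ Ef π₀ M μ), Nind π₀ μ q y)
        + ∑ q ∈ (PP π₀ M μ).filter (fun q => q.2 ∈ Ef π₀ M μ), Nind π₀ μ q y := by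
    rw [Finset.sum_filter, Finset.sum_filter, ← Finset.sum_add_distrib]
    apply Finset.sum_congr rfl
    intro q hq
    unfold wt
    by_cases h1 : q.1 ∈ Ef π₀ M μ <;> by_cases h2 : q.2 ∈ Ef π₀ M μ <;>
      simp [h1, h2, two_mul, add_mul, one_mul]
  rw [hL1, hR, ← Finset.sum_filter_add_sum_filter_not ((Ef π₀ M μ) ×ˢ M) (fun z => z.1 < z.2) F]
  congr 1
  · -- pairs with z.1 < z.2
    have hset : ((Ef π₀ M μ) ×ˢ M).filter (fun z => z.1 < z.2)
        = (PP π₀ M μ).filter (fun q => q.1 ∈ Ef π₀ M μ) := by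
      ext q
      simp only [Finset.mem_filter, Finset.mem_product, mem_PP]
      constructor
      · rintro ⟨⟨h1, h2⟩, h3⟩
        exact ⟨⟨Ef_subset π₀ M μ h1, h2, h3, Or.inl h1⟩, h1⟩
      · rintro ⟨⟨h1, h2, h3, _⟩, h5⟩
        exact ⟨⟨h5, h2⟩, h3⟩
    rw [hset]
    apply Finset.sum_congr rfl
    intro q hq
    rw [Finset.mem_filter, mem_PP] at hq
    obtain ⟨⟨hq1, hq2, hq3, _⟩, _⟩ := hq
    rw [hF]
    simp only
    rw [eidx_lt hq3, Prod.mk.eta]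
    unfold Nind E2
    simp only [and_iff_right hq3.ne]
  · -- pairs with ¬ z.1 < z.2 : restrict to z.2 < z.1 then swap
    have hsub : ((Ef π₀ M μ) ×ˢ M).filter (fun z => z.2 < z.1)
        ⊆ ((Ef π₀ M μ) ×ˢ M).filter (fun z => ¬ z.1 < z.2) := by
      intro z hz
      rw [Finset.mem_filter] at hz ⊢
      exact ⟨hz.1, asymm hz.2⟩
    have hvan : ∀ z ∈ ((Ef π₀ M μ) ×ˢ M).filter (fun z => ¬ z.1 < z.2),
        z ∉ ((Ef π₀ M μ) ×ˢ M).filter (fun z => z.2 < z.1) → F z = 0 := by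
      intro z hz hnz
      rw [Finset.mem_filter] at hz hnz
      have : z.1 = z.2 := le_antisymm (not_lt.mp (fun h => hnz ⟨hz.1, h⟩)) (not_lt.mp hz.2)
      rw [hF]
      simp [this]
    rw [← Finset.sum_subset hsub hvan]
    apply Finset.sum_nbij' (fun z => (z.2, z.1)) (fun z => (z.2, z.1))
    · intro z hz
      rw [Finset.mem_filter, Finset.mem_product] at hz
      rw [Finset.mem_filter, mem_PP]
      exact ⟨⟨hz.1.2, Ef_subset π₀ M μ hz.1.1, hz.2, Or.inr hz.1.1⟩, hz.1.1⟩
    · intro q hq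
      rw [Finset.mem_filter, mem_PP] at hq
      rw [Finset.mem_filter, Finset.mem_product]
      exact ⟨⟨hq.2, hq.1.1⟩, hq.1.2.2.1⟩
    · intro z _; simp
    · intro q _; simp
    · intro z hz
      rw [Finset.mem_filter, Finset.mem_product] at hz
      rw [hF]
      simp only
      unfold Nind E2
      rw [eidx_comm z.1 z.2, eidx_lt hz.2, eidx_comm (sg π₀ μ z.1) (sg π₀ μ z.2)]
      simp only [and_iff_right hz.2.ne']

end Comb

lemma eidx_unord {n : ℕ} {a b c d : Fin n} (h : eidx a b = eidx c d) :
    (a = c ∧ b = d) ∨ (a = d ∧ b = c) := by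
  rcases eidx_pair a b with h1 | h1 <;> rcases eidx_pair c d with h2 | h2 <;>
    rw [h1, h2, Prod.mk.injEq] at h
  · exact Or.inl h
  · exact Or.inr h
  · exact Or.inr ⟨h.2, h.1⟩
  · exact Or.inl ⟨h.2, h.1⟩

section Comb2
variable {n : ℕ} (π₀ : Equiv.Perm (Fin n)) (M : Finset (Fin n)) (μ : Fin n → Fin n)

lemma E2_injOn (hinj : Set.InjOn μ M) {q q' : EIdx n}
    (hq : q ∈ PP π₀ M μ) (hq' : q' ∈ PP π₀ M μ) (h : E2 π₀ μ q = E2 π₀ μ q') : q = q' := by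
  rw [mem_PP] at hq hq'
  unfold E2 at h
  rcases eidx_unord h with ⟨h1, h2⟩ | ⟨h1, h2⟩
  · have e1 := sg_injOn π₀ M μ hinj _ hq.1 _ hq'.1 h1
    have e2 := sg_injOn π₀ M μ hinj _ hq.2.1 _ hq'.2.1 h2
    exact Prod.ext e1 e2
  · have e1 := sg_injOn π₀ M μ hinj _ hq.1 _ hq'.2.1 h1
    have e2 := sg_injOn π₀ M μ hinj _ hq.2.1 _ hq'.1 h2
    exfalso
    have h3 := hq.2.2.1
    have h4 := hq'.2.2.1
    rw [e2] at h3
    rw [← e1] at h4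
    exact lt_asymm h3 h4

lemma mem_Ef_sg {i : Fin n} (hi : i ∈ M) : i ∈ Ef π₀ M μ ↔ sg π₀ μ i ≠ i := by
  have hiff : sg π₀ μ i = i ↔ μ i = π₀ i := by
    unfold sg; exact Equiv.symm_apply_eq π₀
  rw [mem_Ef]
  constructor
  · intro h hc
    exact h.2 (hiff.mp hc)
  · intro h
    exact ⟨hi, fun hc => h (hiff.mpr hc)⟩

def DD : Finset (EIdx n) := (PP π₀ M μ).filter fun q => E2 π₀ μ q = q

def NN : Finset (EIdx n) := (PP π₀ M μ).filter fun q => E2 π₀ μ q ≠ q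

lemma DD_sg {q : EIdx n} (hq : q ∈ DD π₀ M μ) :
    sg π₀ μ q.1 = q.2 ∧ sg π₀ μ q.2 = q.1 := by
  rw [DD, Finset.mem_filter, mem_PP] at hq
  obtain ⟨⟨h1, h2, h3, h4⟩, h5⟩ := hq
  unfold E2 at h5
  have : eidx (sg π₀ μ q.1) (sg π₀ μ q.2) = eidx q.1 q.2 := by
    rw [h5, eidx_lt h3]
  rcases eidx_unord this with ⟨e1, e2⟩ | ⟨e1, e2⟩
  · exfalso
    rcases h4 with h | h
    · exact (mem_Ef_sg π₀ M μ h1).mp h e1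
    · exact (mem_Ef_sg π₀ M μ h2).mp h e2
  · exact ⟨e1, e2⟩

lemma DD_mem_Ef {q : EIdx n} (hq : q ∈ DD π₀ M μ) :
    q.1 ∈ Ef π₀ M μ ∧ q.2 ∈ Ef π₀ M μ := by
  obtain ⟨e1, e2⟩ := DD_sg π₀ M μ hq
  rw [DD, Finset.mem_filter, mem_PP] at hq
  obtain ⟨⟨h1, h2, h3, _⟩, _⟩ := hq
  constructor
  · rw [mem_Ef_sg π₀ M μ h1, e1]; exact h3.ne'
  · rw [mem_Ef_sg π₀ M μ h2, e2]; exact h3.ne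

lemma wt_DD {q : EIdx n} (hq : q ∈ DD π₀ M μ) : wt π₀ M μ q = 2 := by
  obtain ⟨h1, h2⟩ := DD_mem_Ef π₀ M μ hq
  unfold wt
  rw [if_pos h1, if_pos h2]

lemma wt_le_two (q : EIdx n) : wt π₀ M μ q ≤ 2 := by
  unfold wt
  split <;> split <;> omega

lemma card_DD_le : (DD π₀ M μ).card ≤ (Ef π₀ M μ).card := by
  apply Finset.card_le_card_of_injOn Prod.fst
  · intro q hq; exact (DD_mem_Ef π₀ M μ hq).1
  · intro q hq q' hq' h
    simp only [Finset.coe_sort_coe, Finset.mem_coe] at hq hq'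
    have e1 := (DD_sg π₀ M μ hq).1
    have e2 := (DD_sg π₀ M μ hq').1
    apply Prod.ext h
    rw [← e1, ← e2, h]

lemma card_PP_le : (PP π₀ M μ).card ≤ (Ef π₀ M μ).card * n := by
  classical
  have := Finset.card_le_card_of_injOn
    (fun q : EIdx n => if q.1 ∈ Ef π₀ M μ then q else (q.2, q.1))
    (s := PP π₀ M μ) (t := (Ef π₀ M μ) ×ˢ Finset.univ) ?maps ?inj
  · calc (PP π₀ M μ).card ≤ ((Ef π₀ M μ) ×ˢ (Finset.univ : Finset (Fin n))).card := this
      _ = (Ef π₀ M μ).card * n := by rw [Finset.card_product, Finset.card_univ, Fintype.card_fin]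
  case maps =>
    intro q hq
    rw [Finset.mem_coe, mem_PP] at hq
    dsimp only
    by_cases h : q.1 ∈ Ef π₀ M μ
    · rw [if_pos h]
      exact Finset.mem_product.mpr ⟨h, Finset.mem_univ _⟩
    · rw [if_neg h]
      rcases hq.2.2.2 with h' | h'
      · exact absurd h' h
      · exact Finset.mem_product.mpr ⟨h', Finset.mem_univ _⟩
  case inj =>
    intro q hq q' hq' h
    simp only [Finset.coe_sort_coe, Finset.mem_coe] at hq hq'
    rw [mem_PP] at hq hq'
    dsimp only at h
    by_cases h1 : q.1 ∈ Ef π₀ M μ <;> by_cases h2 : q'.1 ∈ Ef π₀ M μ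
    · rw [if_pos h1, if_pos h2] at h; exact h
    · rw [if_pos h1, if_neg h2] at h
      obtain ⟨e1, e2⟩ := Prod.ext_iff.mp h
      exfalso
      have : q.1 < q.1 := by
        calc q.1 < q.2 := hq.2.2.1
        _ = q'.1 := e2
        _ < q'.2 := hq'.2.2.1
        _ = q.1 := e1.symm
      exact lt_irrefl _ this
    · rw [if_neg h1, if_pos h2] at h
      obtain ⟨e1, e2⟩ := Prod.ext_iff.mp h
      dsimp only at e1 e2
      exfalso
      have : q.1 < q.1 := by
        calc q.1 < q.2 := hq.2.2.1
        _ = q'.1 := e1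
        _ < q'.2 := hq'.2.2.1
        _ = q.1 := e2.symm
      exact lt_irrefl _ this
    · rw [if_neg h1, if_neg h2] at h
      obtain ⟨e1, e2⟩ := Prod.ext_iff.mp h
      dsimp only at e1 e2
      exact Prod.ext e2 e1

end Comb2

section Comb3
variable {n : ℕ} (π₀ : Equiv.Perm (Fin n)) (M : Finset (Fin n)) (μ : Fin n → Fin n)

def Adj : EIdx n → EIdx n → Prop := fun q q' => q = E2 π₀ μ q' ∨ E2 π₀ μ q = q'

lemma Adj_symm : ∀ u v, Adj π₀ μ u v → Adj π₀ μ v u := by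
  intro u v h
  rcases h with h | h
  · exact Or.inr h.symm
  · exact Or.inl h.symm

lemma NN_subset_PP : NN π₀ M μ ⊆ PP π₀ M μ := Finset.filter_subset _ _
lemma DD_subset_PP : DD π₀ M μ ⊆ PP π₀ M μ := Finset.filter_subset _ _

lemma NN_deg (hinj : Set.InjOn μ M) :
    ∀ q, ((NN π₀ M μ).filter (fun u => Adj π₀ μ q u ∧ u ≠ q)).card ≤ 2 := by
  intro q
  classical
  have hsub : (NN π₀ M μ).filter (fun u => Adj π₀ μ q u ∧ u ≠ q)
      ⊆ insert (E2 π₀ μ q) ((NN π₀ M μ).filter (fun u => q = E2 π₀ μ u)) := by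
    intro u hu
    rw [Finset.mem_filter] at hu
    rcases hu.2.1 with h | h
    · exact Finset.mem_insert_of_mem (Finset.mem_filter.mpr ⟨hu.1, h⟩)
    · rw [Finset.mem_insert]; exact Or.inl h.symm
  refine le_trans (Finset.card_le_card hsub) (le_trans (Finset.card_insert_le _ _) ?_)
  have hone : ((NN π₀ M μ).filter (fun u => q = E2 π₀ μ u)).card ≤ 1 := by
    apply Finset.card_le_one.mpr
    intro a ha b hb
    rw [Finset.mem_filter] at ha hb
    exact E2_injOn π₀ M μ hinj (NN_subset_PP π₀ M μ ha.1) (NN_subset_PP π₀ M μ hb.1)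
      (ha.2.symm.trans hb.2)
  omega

lemma KK_dep (q : EIdx n) (y y' : Kappa n → Bool) (h : ∀ c ∈ KK π₀ μ q, y c = y' c) :
    Nind π₀ μ q y = Nind π₀ μ q y' := by
  unfold Nind Xb
  have h1 := h (Sum.inl q) (by simp [KK])
  have h2 := h (Sum.inl (E2 π₀ μ q)) (by simp [KK])
  have h3 := h (Sum.inr (Sum.inl q)) (by simp [KK])
  have h4 := h (Sum.inr (Sum.inr (E2 π₀ μ q))) (by simp [KK])
  rw [h1, h2, h3, h4]

lemma KK_disjoint (hinj : Set.InjOn μ M) {q q' : EIdx n}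
    (hq : q ∈ PP π₀ M μ) (hq' : q' ∈ PP π₀ M μ) (hne : q ≠ q')
    (h12 : q ≠ E2 π₀ μ q') (h21 : E2 π₀ μ q ≠ q') :
    Disjoint (KK π₀ μ q) (KK π₀ μ q') := by
  have hE2 : E2 π₀ μ q ≠ E2 π₀ μ q' := fun h => hne (E2_injOn π₀ M μ hinj hq hq' h)
  rw [Finset.disjoint_left]
  intro c hc hc'
  simp only [KK, Finset.mem_insert, Finset.mem_singleton] at hc hc'
  rcases hc with rfl | rfl | rfl | rfl <;>
    rcases hc' with h | h | h | h <;>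
    simp only [Sum.inl.injEq, Sum.inr.injEq, reduceCtorEq] at h
  · exact hne h
  · exact h12 h
  · exact h21 h
  · exact hE2 h
  · exact hne h
  · exact hE2 h

end Comb3

section Prob
variable {n : ℕ} (π₀ : Equiv.Perm (Fin n)) (M : Finset (Fin n)) (μ : Fin n → Fin n)
variable (p : Fin n → Fin n → ℝ) (s : ℝ)

lemma bern_true (r : ℝ) : bern r {true} = min (ENNReal.ofReal r) 1 := by
  unfold bern
  rw [PMF.toMeasure_apply_singleton _ _ (measurableSet_singleton _), PMF.bernoulli_apply]
  simp only [cond_true]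
  rw [ENNReal.coe_min]
  rfl

lemma bern_true_le (r : ℝ) : bern r {true} ≤ ENNReal.ofReal r := by
  rw [bern_true]; exact min_le_left _ _

lemma rho_block (q : EIdx n) :
    rho n p s {y | ∀ c ∈ KK π₀ μ q, y c = true} = ∏ c ∈ KK π₀ μ q, bern (pr p s c) {true} :=
  pi_forall_true _ _

lemma pr_inl_le (hp0 : ∀ i j, 0 ≤ p i j) (e : EIdx n) :
    bern (pr p s (Sum.inl e)) {true} ≤ ENNReal.ofReal (⨆ e' : Fin n × Fin n, p e'.1 e'.2) := by
  refine le_trans (bern_true_le _) (ENNReal.ofReal_le_ofReal ?_)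
  exact le_ciSup (f := fun e' : Fin n × Fin n => p e'.1 e'.2)
    (Set.Finite.bddAbove (Set.finite_range _)) e

lemma pr_inr_le (c : EIdx n ⊕ EIdx n) :
    bern (pr p s (Sum.inr c)) {true} ≤ ENNReal.ofReal s := by
  cases c <;> exact bern_true_le s

lemma pmax_nonneg (hp0 : ∀ i j, 0 ≤ p i j) (e : EIdx n) :
    0 ≤ ⨆ e' : Fin n × Fin n, p e'.1 e'.2 :=
  le_trans (hp0 e.1 e.2) (le_ciSup (f := fun e' : Fin n × Fin n => p e'.1 e'.2)
    (Set.Finite.bddAbove (Set.finite_range _)) e)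

lemma block_bound_NN (hp0 : ∀ i j, 0 ≤ p i j) (hs0 : 0 ≤ s) {q : EIdx n}
    (hq : E2 π₀ μ q ≠ q) :
    rho n p s {y | ∀ c ∈ KK π₀ μ q, y c = true}
      ≤ ENNReal.ofReal ((⨆ e : Fin n × Fin n, p e.1 e.2) ^ 2 * s ^ 2) := by
  have hqq : q ≠ E2 π₀ μ q := hq.symm
  rw [rho_block]
  unfold KK
  rw [Finset.prod_insert (by simp [hqq]), Finset.prod_insert (by simp),
    Finset.prod_insert (by simp), Finset.prod_singleton]
  have hpm0 : 0 ≤ ⨆ e' : Fin n × Fin n, p e'.1 e'.2 := pmax_nonneg p hp0 q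
  calc bern (pr p s (Sum.inl q)) {true} * (bern (pr p s (Sum.inl (E2 π₀ μ q))) {true} *
        (bern (pr p s (Sum.inr (Sum.inl q))) {true} *
          bern (pr p s (Sum.inr (Sum.inr (E2 π₀ μ q)))) {true}))
      ≤ ENNReal.ofReal (⨆ e' : Fin n × Fin n, p e'.1 e'.2) *
        (ENNReal.ofReal (⨆ e' : Fin n × Fin n, p e'.1 e'.2) *
          (ENNReal.ofReal s * ENNReal.ofReal s)) := by
        gcongr
        · exact pr_inl_le p s hp0 q
        · exact pr_inl_le p s hp0 _
        · exact pr_inr_le p s _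
        · exact pr_inr_le p s _
    _ = ENNReal.ofReal ((⨆ e : Fin n × Fin n, p e.1 e.2) ^ 2 * s ^ 2) := by
        rw [← ENNReal.ofReal_mul hs0, ← ENNReal.ofReal_mul hpm0, ← ENNReal.ofReal_mul hpm0]
        congr 1; ring

lemma block_bound_DD (hp0 : ∀ i j, 0 ≤ p i j) (hs0 : 0 ≤ s) {q : EIdx n}
    (hq : E2 π₀ μ q = q) :
    rho n p s {y | ∀ c ∈ KK π₀ μ q, y c = true}
      ≤ ENNReal.ofReal ((⨆ e : Fin n × Fin n, p e.1 e.2) * s ^ 2) := by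
  rw [rho_block]
  unfold KK
  rw [hq, Finset.insert_idem]
  rw [Finset.prod_insert (by simp), Finset.prod_insert (by simp), Finset.prod_singleton]
  have hpm0 : 0 ≤ ⨆ e' : Fin n × Fin n, p e'.1 e'.2 := pmax_nonneg p hp0 q
  calc bern (pr p s (Sum.inl q)) {true} * (bern (pr p s (Sum.inr (Sum.inl q))) {true} *
        bern (pr p s (Sum.inr (Sum.inr q))) {true})
      ≤ ENNReal.ofReal (⨆ e' : Fin n × Fin n, p e'.1 e'.2) *
        (ENNReal.ofReal s * ENNReal.ofReal s) := by
        gcongr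
        · exact pr_inl_le p s hp0 q
        · exact pr_inr_le p s _
        · exact pr_inr_le p s _
    _ = ENNReal.ofReal ((⨆ e : Fin n × Fin n, p e.1 e.2) * s ^ 2) := by
        rw [← ENNReal.ofReal_mul hs0, ← ENNReal.ofReal_mul hpm0]
        congr 1; ring

lemma Xb_iff_KK (q : EIdx n) (y : Kappa n → Bool) :
    Xb q (E2 π₀ μ q) y ↔ ∀ c ∈ KK π₀ μ q, y c = true := by
  unfold Xb KK
  constructor
  · rintro ⟨h1, h2, h3, h4⟩ c hc
    simp only [Finset.mem_insert, Finset.mem_singleton] at hc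
    rcases hc with rfl | rfl | rfl | rfl <;> assumption
  · intro h
    exact ⟨h _ (by simp), h _ (by simp), h _ (by simp), h _ (by simp)⟩

lemma chernoff_step (SS : Finset (EIdx n)) (aw : EIdx n → ℝ) (haw : ∀ q ∈ SS, 0 ≤ aw q)
    (hdisj : ∀ q ∈ SS, ∀ q' ∈ SS, q ≠ q' → Disjoint (KK π₀ μ q) (KK π₀ μ q')) (τ : ℝ) :
    rho n p s {y | τ ≤ ∑ q ∈ SS, aw q * (Nind π₀ μ q y : ℝ)}
      ≤ ENNReal.ofReal (Real.exp (-τ)) *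
        ∏ q ∈ SS, (1 + ENNReal.ofReal (Real.exp (aw q) - 1) *
          rho n p s {y | ∀ c ∈ KK π₀ μ q, y c = true}) := by
  classical
  set W : (Kappa n → Bool) → ℝ≥0∞ := fun y =>
    ∏ q ∈ SS, (1 + ENNReal.ofReal (Real.exp (aw q) - 1) * (Nind π₀ μ q y : ℝ≥0∞)) with hW
  have hfac : ∀ q ∈ SS, ∀ y, 1 + ENNReal.ofReal (Real.exp (aw q) - 1) * (Nind π₀ μ q y : ℝ≥0∞)
      = ENNReal.ofReal (Real.exp (aw q * (Nind π₀ μ q y : ℝ))) := by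
    intro q hq y
    unfold Nind
    split
    · simp only [Nat.cast_one, mul_one]
      rw [← ENNReal.ofReal_one, ← ENNReal.ofReal_add zero_le_one
        (by linarith [Real.one_le_exp (haw q hq)])]
      congr 1
      ring
    · simp
  have hWeq : ∀ y, W y = ENNReal.ofReal (Real.exp (∑ q ∈ SS, aw q * (Nind π₀ μ q y : ℝ))) := by
    intro y
    rw [hW]
    simp only
    rw [Finset.prod_congr rfl (fun q hq => hfac q hq y), Real.exp_sum,
      ENNReal.ofReal_prod_of_nonneg (fun q _ => Real.exp_nonneg _)]
  have hsub : {y | τ ≤ ∑ q ∈ SS, aw q * (Nind π₀ μ q y : ℝ)}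
      ⊆ {y | ENNReal.ofReal (Real.exp τ) ≤ W y} := by
    intro y hy
    rw [Set.mem_setOf_eq, hWeq y]
    exact ENNReal.ofReal_le_ofReal (Real.exp_le_exp.mpr hy)
  have hmarkov := mul_meas_ge_le_lintegral₀ (μ := rho n p s)
    (measurable_of_countable W).aemeasurable (ENNReal.ofReal (Real.exp τ))
  have hmono := measure_mono (μ := rho n p s) hsub
  have hint : ∫⁻ y, W y ∂(rho n p s) = ∏ q ∈ SS, (1 + ENNReal.ofReal (Real.exp (aw q) - 1) *
      rho n p s {y | ∀ c ∈ KK π₀ μ q, y c = true}) := by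
    rw [hW]
    simp only
    unfold rho
    rw [lintegral_prod_blocks _ SS (fun q => KK π₀ μ q)
      (fun q y => 1 + ENNReal.ofReal (Real.exp (aw q) - 1) * (Nind π₀ μ q y : ℝ≥0∞))
      (fun q hq q' hq' hne => hdisj q hq q' hq' hne)
      (fun q hq y y' h => by rw [KK_dep π₀ μ q y y' h])]
    apply Finset.prod_congr rfl
    intro q hq
    rw [lintegral_add_left measurable_const,
      lintegral_const_mul _ (measurable_of_countable _)]
    have hNset : (fun y => ((Nind π₀ μ q y : ℝ≥0∞)))
        = Set.indicator {y | ∀ c ∈ KK π₀ μ q, y c = true} (fun _ => (1:ℝ≥0∞)) := by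
      funext y
      rw [Set.indicator_apply]
      unfold Nind
      simp only [Nat.cast_ite, Nat.cast_one, Nat.cast_zero, Set.mem_setOf_eq]
      rw [if_congr (Xb_iff_KK π₀ μ q y) rfl rfl]
    rw [hNset, lintegral_indicator_const (measAll _), one_mul]
    simp only [lintegral_one, measure_univ, rho]
  have hεne : ENNReal.ofReal (Real.exp τ) ≠ 0 := by
    simp [Real.exp_pos τ, ENNReal.ofReal_eq_zero, not_le]
  have hεtop : ENNReal.ofReal (Real.exp τ) ≠ ⊤ := ENNReal.ofReal_ne_top
  calc rho n p s {y | τ ≤ ∑ q ∈ SS, aw q * (Nind π₀ μ q y : ℝ)}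
      ≤ rho n p s {y | ENNReal.ofReal (Real.exp τ) ≤ W y} := hmono
    _ = (ENNReal.ofReal (Real.exp τ))⁻¹ * (ENNReal.ofReal (Real.exp τ) *
          rho n p s {y | ENNReal.ofReal (Real.exp τ) ≤ W y}) := by
        rw [← mul_assoc, ENNReal.inv_mul_cancel hεne hεtop, one_mul]
    _ ≤ (ENNReal.ofReal (Real.exp τ))⁻¹ * ∫⁻ y, W y ∂(rho n p s) := by
        exact mul_le_mul_right hmarkov _
    _ = ENNReal.ofReal (Real.exp (-τ)) * ∏ q ∈ SS, (1 + ENNReal.ofReal (Real.exp (aw q) - 1) *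
          rho n p s {y | ∀ c ∈ KK π₀ μ q, y c = true}) := by
        rw [hint, Real.exp_neg, ENNReal.ofReal_inv_of_pos (Real.exp_pos τ)]

end Prob

lemma factor_bound {mq : ℝ≥0∞} {c a : ℝ} (hm : mq ≤ ENNReal.ofReal c) (hc : 0 ≤ c)
    (ha : 0 ≤ a) :
    1 + ENNReal.ofReal (Real.exp a - 1) * mq
      ≤ ENNReal.ofReal (Real.exp (Real.exp a * c)) := by
  have h1 : (0:ℝ) ≤ Real.exp a - 1 := by linarith [Real.one_le_exp ha]
  calc 1 + ENNReal.ofReal (Real.exp a - 1) * mq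
      ≤ 1 + ENNReal.ofReal (Real.exp a - 1) * ENNReal.ofReal c := by gcongr
    _ = ENNReal.ofReal (1 + (Real.exp a - 1) * c) := by
        rw [← ENNReal.ofReal_mul h1, ENNReal.ofReal_add zero_le_one (by positivity),
          ENNReal.ofReal_one]
    _ ≤ ENNReal.ofReal (Real.exp (Real.exp a * c)) := by
        apply ENNReal.ofReal_le_ofReal
        calc 1 + (Real.exp a - 1) * c ≤ Real.exp ((Real.exp a - 1) * c) := by
              linarith [Real.add_one_le_exp ((Real.exp a - 1) * c)]
          _ ≤ Real.exp (Real.exp a * c) := by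
              apply Real.exp_le_exp.mpr
              nlinarith
    
lemma exists_third (h : Fin 3 → ℕ) : ∃ t, h 0 + h 1 + h 2 ≤ 3 * h t := by
  rcases le_total (h 0) (h 1) with a | a
  · rcases le_total (h 1) (h 2) with b | b
    · exact ⟨2, by omega⟩
    · exact ⟨1, by omega⟩
  · rcases le_total (h 0) (h 2) with b | b
    · exact ⟨2, by omega⟩
    · exact ⟨0, by omega⟩

section PerClass
variable {n : ℕ} (π₀ : Equiv.Perm (Fin n)) (M : Finset (Fin n)) (μ : Fin n → Fin n)
variable (p : Fin n → Fin n → ℝ) (s : ℝ)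

lemma per_class (hinj : Set.InjOn μ M) (hp0 : ∀ i j, 0 ≤ p i j) (hs0 : 0 ≤ s)
    (χ : EIdx n → Fin 3)
    (hχ : ∀ u ∈ NN π₀ M μ, ∀ v ∈ NN π₀ M μ, u ≠ v → Adj π₀ μ u v → χ u ≠ χ v)
    (hpm0 : 0 ≤ ⨆ e : Fin n × Fin n, p e.1 e.2)
    (t : Fin 3) (θ : ℝ) (hθ : 0 < θ) (d k : ℕ) (hd : (Ef π₀ M μ).card = d) :
    rho n p s {y | θ * ((k * d : ℕ) : ℝ) ≤
        ∑ q ∈ DD π₀ M μ ∪ (NN π₀ M μ).filter (fun q => χ q = t),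
          (if q ∈ DD π₀ M μ then 2 * θ else 3 * θ * (wt π₀ M μ q : ℝ)) * (Nind π₀ μ q y : ℝ)}
      ≤ ENNReal.ofReal (Real.exp (-(θ * ((k * d : ℕ) : ℝ))
          + d * (Real.exp (2 * θ) * ((⨆ e : Fin n × Fin n, p e.1 e.2) * s ^ 2))
          + d * n * (Real.exp (6 * θ) * ((⨆ e : Fin n × Fin n, p e.1 e.2) ^ 2 * s ^ 2)))) := by
  classical
  set pmax := ⨆ e : Fin n × Fin n, p e.1 e.2 with hpm
  set CC := (NN π₀ M μ).filter (fun q => χ q = t) with hCC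
  set SS := DD π₀ M μ ∪ CC with hSS
  have hCC_NN : CC ⊆ NN π₀ M μ := Finset.filter_subset _ _
  have hDDNN : ∀ q, q ∈ DD π₀ M μ → q ∉ NN π₀ M μ := by
    intro q hq hq'
    rw [DD, Finset.mem_filter] at hq
    rw [NN, Finset.mem_filter] at hq'
    exact hq'.2 hq.2
  have hSS_PP : ∀ q ∈ SS, q ∈ PP π₀ M μ := by
    intro q hq
    rcases Finset.mem_union.mp hq with h | h
    · exact DD_subset_PP π₀ M μ h
    · exact NN_subset_PP π₀ M μ (hCC_NN h)
  have hDD_E2 : ∀ q ∈ DD π₀ M μ, E2 π₀ μ q = q := by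
    intro q hq; exact (Finset.mem_filter.mp hq).2
  have hNN_E2 : ∀ q ∈ NN π₀ M μ, E2 π₀ μ q ≠ q := by
    intro q hq; exact (Finset.mem_filter.mp hq).2
  -- KK disjointness on SS
  have hKK : ∀ q ∈ SS, ∀ q' ∈ SS, q ≠ q' → Disjoint (KK π₀ μ q) (KK π₀ μ q') := by
    intro q hq q' hq' hne
    have hqPP := hSS_PP q hq
    have hq'PP := hSS_PP q' hq'
    have hinjE2 : E2 π₀ μ q = E2 π₀ μ q' → q = q' := fun h =>
      E2_injOn π₀ M μ hinj hqPP hq'PP h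
    apply KK_disjoint π₀ M μ hinj hqPP hq'PP hne
    · -- q ≠ E2 q'
      rcases Finset.mem_union.mp hq' with h' | h'
      · rw [hDD_E2 q' h']; exact hne
      · intro hc
        rcases Finset.mem_union.mp hq with h | h
        · exact hne (hinjE2 (by rw [hDD_E2 q h, hc]))
        · -- both in CC: same color, so not adjacent
          have hcol := hχ q (hCC_NN h) q' (hCC_NN h') hne
          have : χ q = χ q' := by
            rw [(Finset.mem_filter.mp h).2, (Finset.mem_filter.mp h').2]
          exact hcol (Or.inl hc) this
    · -- E2 q ≠ q'
      rcases Finset.mem_union.mp hq with h | h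
      · rw [hDD_E2 q h]; exact hne
      · intro hc
        rcases Finset.mem_union.mp hq' with h' | h'
        · exact hne (hinjE2 (by rw [hDD_E2 q' h', hc]))
        · have hcol := hχ q (hCC_NN h) q' (hCC_NN h') hne
          have : χ q = χ q' := by
            rw [(Finset.mem_filter.mp h).2, (Finset.mem_filter.mp h').2]
          exact hcol (Or.inr hc) this
  -- apply chernoff
  set aw : EIdx n → ℝ := fun q => if q ∈ DD π₀ M μ then 2 * θ else 3 * θ * (wt π₀ M μ q : ℝ)
    with haw_def
  have haw : ∀ q ∈ SS, 0 ≤ aw q := by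
    intro q _
    rw [haw_def]
    dsimp only
    split
    · linarith
    · positivity
  refine le_trans (chernoff_step π₀ μ p s SS aw haw hKK (θ * ((k * d : ℕ) : ℝ))) ?_
  -- bound the product
  have hdisjU : Disjoint (DD π₀ M μ) CC := by
    rw [Finset.disjoint_left]
    intro q hq hq'
    exact hDDNN q hq (hCC_NN hq')
  rw [Finset.prod_union hdisjU]
  have hDbound : ∀ q ∈ DD π₀ M μ,
      1 + ENNReal.ofReal (Real.exp (aw q) - 1) *
        rho n p s {y | ∀ c ∈ KK π₀ μ q, y c = true}
      ≤ ENNReal.ofReal (Real.exp (Real.exp (2 * θ) * (pmax * s ^ 2))) := by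
    intro q hq
    have : aw q = 2 * θ := by rw [haw_def]; dsimp only; rw [if_pos hq]
    rw [this]
    exact factor_bound (block_bound_DD π₀ μ p s hp0 hs0 (hDD_E2 q hq))
      (by positivity) (by linarith)
  have hNbound : ∀ q ∈ CC,
      1 + ENNReal.ofReal (Real.exp (aw q) - 1) *
        rho n p s {y | ∀ c ∈ KK π₀ μ q, y c = true}
      ≤ ENNReal.ofReal (Real.exp (Real.exp (6 * θ) * (pmax ^ 2 * s ^ 2))) := by
    intro q hq
    have hle : aw q ≤ 6 * θ := by
      rw [haw_def]
      dsimp only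
      rw [if_neg (fun h => hDDNN q h (hCC_NN hq))]
      have := wt_le_two π₀ M μ q
      have h2 : (wt π₀ M μ q : ℝ) ≤ 2 := by exact_mod_cast this
      nlinarith
    calc 1 + ENNReal.ofReal (Real.exp (aw q) - 1) *
          rho n p s {y | ∀ c ∈ KK π₀ μ q, y c = true}
        ≤ 1 + ENNReal.ofReal (Real.exp (6 * θ) - 1) *
          rho n p s {y | ∀ c ∈ KK π₀ μ q, y c = true} := by
          have hgo : Real.exp (aw q) - 1 ≤ Real.exp (6 * θ) - 1 := by
            linarith [Real.exp_le_exp.mpr hle]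
          gcongr
      _ ≤ ENNReal.ofReal (Real.exp (Real.exp (6 * θ) * (pmax ^ 2 * s ^ 2))) :=
          factor_bound (block_bound_NN π₀ μ p s hp0 hs0 (hNN_E2 q (hCC_NN hq)))
            (by positivity) (by linarith)
  have hcard_DD : (DD π₀ M μ).card ≤ d := hd ▸ card_DD_le π₀ M μ
  have hcard_CC : CC.card ≤ d * n := by
    refine le_trans (Finset.card_le_card ?_) (hd ▸ card_PP_le π₀ M μ)
    exact subset_trans hCC_NN (NN_subset_PP π₀ M μ)
  have hb1 : (0:ℝ) ≤ Real.exp (2 * θ) * (pmax * s ^ 2) := by positivity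
  have hb2 : (0:ℝ) ≤ Real.exp (6 * θ) * (pmax ^ 2 * s ^ 2) := by positivity
  calc ENNReal.ofReal (Real.exp (-(θ * ((k * d : ℕ) : ℝ)))) *
        ((∏ q ∈ DD π₀ M μ, (1 + ENNReal.ofReal (Real.exp (aw q) - 1) *
          rho n p s {y | ∀ c ∈ KK π₀ μ q, y c = true})) *
         ∏ q ∈ CC, (1 + ENNReal.ofReal (Real.exp (aw q) - 1) *
          rho n p s {y | ∀ c ∈ KK π₀ μ q, y c = true}))
      ≤ ENNReal.ofReal (Real.exp (-(θ * ((k * d : ℕ) : ℝ)))) *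
        (ENNReal.ofReal (Real.exp (Real.exp (2 * θ) * (pmax * s ^ 2))) ^ (DD π₀ M μ).card *
         ENNReal.ofReal (Real.exp (Real.exp (6 * θ) * (pmax ^ 2 * s ^ 2))) ^ CC.card) := by
        gcongr
        · exact Finset.prod_le_pow_card _ _ _ hDbound
        · exact Finset.prod_le_pow_card _ _ _ hNbound
    _ ≤ ENNReal.ofReal (Real.exp (-(θ * ((k * d : ℕ) : ℝ)))) *
        (ENNReal.ofReal (Real.exp (d * (Real.exp (2 * θ) * (pmax * s ^ 2)))) *
         ENNReal.ofReal (Real.exp ((d * n : ℕ) * (Real.exp (6 * θ) * (pmax ^ 2 * s ^ 2))))) := by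
        gcongr
        · rw [← ENNReal.ofReal_pow (Real.exp_nonneg _), ← Real.exp_nat_mul]
          apply ENNReal.ofReal_le_ofReal
          apply Real.exp_le_exp.mpr
          have : ((DD π₀ M μ).card : ℝ) ≤ (d : ℝ) := by exact_mod_cast hcard_DD
          nlinarith
        · rw [← ENNReal.ofReal_pow (Real.exp_nonneg _), ← Real.exp_nat_mul]
          apply ENNReal.ofReal_le_ofReal
          apply Real.exp_le_exp.mpr
          have : (CC.card : ℝ) ≤ ((d * n : ℕ) : ℝ) := by exact_mod_cast hcard_CC
          nlinarith
    _ = ENNReal.ofReal (Real.exp (-(θ * ((k * d : ℕ) : ℝ))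
          + d * (Real.exp (2 * θ) * (pmax * s ^ 2))
          + d * n * (Real.exp (6 * θ) * (pmax ^ 2 * s ^ 2)))) := by
        rw [← ENNReal.ofReal_mul (Real.exp_nonneg _), ← ENNReal.ofReal_mul (Real.exp_nonneg _),
          ← Real.exp_add, ← Real.exp_add]
        congr 1
        push_cast
        ring

end PerClass
end GMAux
end
open GraphMatching in
/-- Lemma 10: conditionally on `π⋆ = π₀`, for a matching `(M, μ)`
making `d ≥ 1` errors, `P(f(μ) ≥ kd | π⋆ = π₀) ≤ 3 exp(−d(θk − e^{2θ} p_max s² −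
n e^{6θ} p_max² s²))` for any `θ > 0`. -/
theorem weak_kcore_probability_bound
    (n : ℕ) (p : Fin n → Fin n → ℝ)
    (hsym : ∀ i j, p i j = p j i)
    (hp0 : ∀ i j, 0 ≤ p i j) (hp1 : ∀ i j, p i j ≤ 1)
    (hdiag : ∀ i, p i i = 0)
    (s : ℝ) (hs0 : 0 ≤ s) (hs1 : s ≤ 1)
    (π₀ : Equiv.Perm (Fin n))
    (M : Finset (Fin n)) (μ : Fin n → Fin n) (hinj : Set.InjOn μ M)
    (d : ℕ) (hd : 1 ≤ d) (herr : (M.filter fun i => μ i ≠ π₀ i).card = d)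
    (k : ℕ) (hk : 0 < k) (θ : ℝ) (hθ : 0 < θ) :
    (ProbabilityTheory.cond (CIRG n p s) {ω | ω.2 = π₀})
        {ω | k * d ≤ ∑ i ∈ M.filter fun i' => μ i' ≠ π₀ i', interDeg ω M μ i} ≤
      ENNReal.ofReal
        (3 * Real.exp (-(d : ℝ) *
          (θ * k - Real.exp (2 * θ) * (⨆ e : Fin n × Fin n, p e.1 e.2) * s ^ 2 -
            n * Real.exp (6 * θ) * (⨆ e : Fin n × Fin n, p e.1 e.2) ^ 2 * s ^ 2))) := by
  classical
  have hd' : (GMAux.Ef π₀ M μ).card = d := herr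
  have hn : 0 < n := by
    have hne : (GMAux.Ef π₀ M μ).Nonempty := Finset.card_pos.mp (by rw [hd']; omega)
    obtain ⟨i, _⟩ := hne
    exact i.pos
  have hpm0 : 0 ≤ ⨆ e : Fin n × Fin n, p e.1 e.2 :=
    GMAux.pmax_nonneg p hp0 ((⟨0, hn⟩ : Fin n), (⟨0, hn⟩ : Fin n))
  obtain ⟨χ, hχ⟩ := GMAux.exists_three_coloring (GMAux.Adj π₀ μ) (GMAux.Adj_symm π₀ μ)
    (GMAux.NN π₀ M μ) (fun v => by
      have h := GMAux.NN_deg π₀ M μ hinj v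
      convert h using 2
      exact Finset.filter_congr_decidable _ _ _)
  rw [GMAux.cond_apply', ← (GMAux.phi_mp p s).map_eq,
    Measure.map_apply (measurable_of_countable _) (GMAux.measAll _)]
  set EV : Fin 3 → Set (GMAux.Kappa n → Bool) := fun t => {y | θ * ((k * d : ℕ) : ℝ) ≤
      ∑ q ∈ GMAux.DD π₀ M μ ∪ (GMAux.NN π₀ M μ).filter (fun q => χ q = t),
        (if q ∈ GMAux.DD π₀ M μ then 2 * θ else 3 * θ * (GMAux.wt π₀ M μ q : ℝ)) *
          (GMAux.Nind π₀ μ q y : ℝ)} with hEV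
  -- sums and partition
  set gD : (GMAux.Kappa n → Bool) → ℕ :=
    fun y => ∑ q ∈ GMAux.DD π₀ M μ, GMAux.wt π₀ M μ q * GMAux.Nind π₀ μ q y with hgD
  set hT : Fin 3 → (GMAux.Kappa n → Bool) → ℕ :=
    fun t y => ∑ q ∈ (GMAux.NN π₀ M μ).filter (fun q => χ q = t),
      GMAux.wt π₀ M μ q * GMAux.Nind π₀ μ q y with hhT
  have hdisjDN : ∀ t, Disjoint (GMAux.DD π₀ M μ) ((GMAux.NN π₀ M μ).filter (fun q => χ q = t)) := by
    intro t
    rw [Finset.disjoint_left]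
    intro q hq hq'
    have h1 := (Finset.mem_filter.mp hq).2
    have h2 := (Finset.mem_filter.mp (Finset.mem_filter.mp hq').1).2
    exact h2 h1
  have hsplit : ∀ y, ∑ q ∈ GMAux.PP π₀ M μ, GMAux.wt π₀ M μ q * GMAux.Nind π₀ μ q y
      = gD y + (hT 0 y + hT 1 y + hT 2 y) := by
    intro y
    have hPP : GMAux.PP π₀ M μ = GMAux.DD π₀ M μ ∪ GMAux.NN π₀ M μ :=
      (Finset.filter_union_filter_not_eq _ _).symm
    have hdisj2 : Disjoint (GMAux.DD π₀ M μ) (GMAux.NN π₀ M μ) :=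
      Finset.disjoint_filter_filter_not _ _ _
    rw [hPP, Finset.sum_union hdisj2]
    congr 1
    have := Finset.sum_fiberwise_of_maps_to (g := χ) (s := GMAux.NN π₀ M μ)
      (t := (Finset.univ : Finset (Fin 3)))
      (fun q _ => Finset.mem_univ _)
      (f := fun q => GMAux.wt π₀ M μ q * GMAux.Nind π₀ μ q y)
    rw [← this, Fin.sum_univ_three]
  have hsum_eq : ∀ t y,
      ∑ q ∈ GMAux.DD π₀ M μ ∪ (GMAux.NN π₀ M μ).filter (fun q => χ q = t),
        (if q ∈ GMAux.DD π₀ M μ then 2 * θ else 3 * θ * (GMAux.wt π₀ M μ q : ℝ)) *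
          (GMAux.Nind π₀ μ q y : ℝ)
      = θ * (gD y : ℝ) + 3 * θ * (hT t y : ℝ) := by
    intro t y
    rw [Finset.sum_union (hdisjDN t), hgD, hhT]
    simp only
    push_cast
    rw [Finset.mul_sum, Finset.mul_sum]
    congr 1
    · apply Finset.sum_congr rfl
      intro q hq
      rw [if_pos hq]
      have h2 : (GMAux.wt π₀ M μ q : ℝ) = 2 := by
        rw [GMAux.wt_DD π₀ M μ hq]; norm_num
      rw [h2]
      ring
    · apply Finset.sum_congr rfl
      intro q hq
      rw [if_neg (Finset.disjoint_right.mp (hdisjDN t) hq)]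
      ring
  have hincl : (GMAux.Phi ⁻¹' {x | ((x, π₀) : Omega n) ∈
      {ω | k * d ≤ ∑ i ∈ M.filter fun i' => μ i' ≠ π₀ i', interDeg ω M μ i}})
      ⊆ EV 0 ∪ (EV 1 ∪ EV 2) := by
    intro y hy
    have hy' : k * d ≤ ∑ i ∈ GMAux.Ef π₀ M μ, interDeg (GMAux.Phi y, π₀) M μ i := hy
    rw [GMAux.f_eq π₀ M μ hinj y, hsplit y] at hy'
    obtain ⟨t, ht⟩ := GMAux.exists_third (fun t => hT t y)
    have hkd : k * d ≤ gD y + 3 * hT t y := by omega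
    have hmem : y ∈ EV t := by
      rw [hEV]
      simp only [Set.mem_setOf_eq]
      rw [hsum_eq t y]
      have hcast : ((k * d : ℕ) : ℝ) ≤ (gD y : ℝ) + 3 * (hT t y : ℝ) := by
        exact_mod_cast hkd
      nlinarith
    fin_cases t
    · exact Or.inl hmem
    · exact Or.inr (Or.inl hmem)
    · exact Or.inr (Or.inr hmem)
  refine le_trans (measure_mono hincl) ?_
  refine le_trans (measure_union_le _ _) ?_
  refine le_trans (add_le_add_right (measure_union_le _ _) _) ?_
  have hper : ∀ t : Fin 3, GMAux.rho n p s (EV t) ≤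
      ENNReal.ofReal (Real.exp (-(θ * ((k * d : ℕ) : ℝ))
        + d * (Real.exp (2 * θ) * ((⨆ e : Fin n × Fin n, p e.1 e.2) * s ^ 2))
        + d * n * (Real.exp (6 * θ) * ((⨆ e : Fin n × Fin n, p e.1 e.2) ^ 2 * s ^ 2)))) := by
    intro t
    exact GMAux.per_class π₀ M μ p s hinj hp0 hs0 χ hχ hpm0 t θ hθ d k hd'
  refine le_trans (add_le_add (hper 0) (add_le_add (hper 1) (hper 2))) ?_
  have hX : -(θ * ((k * d : ℕ) : ℝ))
        + d * (Real.exp (2 * θ) * ((⨆ e : Fin n × Fin n, p e.1 e.2) * s ^ 2))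
        + d * n * (Real.exp (6 * θ) * ((⨆ e : Fin n × Fin n, p e.1 e.2) ^ 2 * s ^ 2))
      = -(d : ℝ) * (θ * k - Real.exp (2 * θ) * (⨆ e : Fin n × Fin n, p e.1 e.2) * s ^ 2 -
          n * Real.exp (6 * θ) * (⨆ e : Fin n × Fin n, p e.1 e.2) ^ 2 * s ^ 2) := by
    push_cast
    ring
  rw [hX]
  rw [show (3:ℝ) * Real.exp (-(d : ℝ) * (θ * k -
      Real.exp (2 * θ) * (⨆ e : Fin n × Fin n, p e.1 e.2) * s ^ 2 -
      n * Real.exp (6 * θ) * (⨆ e : Fin n × Fin n, p e.1 e.2) ^ 2 * s ^ 2))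
    = Real.exp (-(d : ℝ) * (θ * k -
      Real.exp (2 * θ) * (⨆ e : Fin n × Fin n, p e.1 e.2) * s ^ 2 -
      n * Real.exp (6 * θ) * (⨆ e : Fin n × Fin n, p e.1 e.2) ^ 2 * s ^ 2))
      + (Real.exp _ + Real.exp _) from by ring]
  rw [ENNReal.ofReal_add (Real.exp_nonneg _) (by positivity),
    ENNReal.ofReal_add (Real.exp_nonneg _) (Real.exp_nonneg _)]
end

section
/- Let G ~ G(p) be an inhomogeneous random graph on [n], let k be a positive integer, and for i ∈ [n] let E_i := 1(deg_G(i) ≤ k). Then for any distinct i, j ∈ [n] with p_{ij} ≤ 1/2, Cov(E_i, E_j) ≤ 3 p_{ij}. -/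
open MeasureTheory ProbabilityTheory Filter Real
open scoped ENNReal Classical

noncomputable section AuxLemmas

namespace GraphMatching

variable {n : ℕ}

instance bern_isProbabilityMeasure (x : ℝ) : IsProbabilityMeasure (bern x) := by
  unfold bern; infer_instance

instance edgeMeasure_isProbabilityMeasure (p : Fin n → Fin n → ℝ) :
    IsProbabilityMeasure (edgeMeasure n p) := by
  unfold edgeMeasure; infer_instance

lemma eidx_symm (i j : Fin n) : eidx i j = eidx j i := by
  unfold eidx
  rcases le_or_gt i j with h | h
  · rcases le_or_gt j i with h' | h'
    · have := le_antisymm h h'; subst this; simp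
    · rw [if_pos h, if_neg (not_le.mpr h')]
  · rw [if_neg (not_le.mpr h), if_pos h.le]

lemma eidx_fst_or_snd (i l : Fin n) : (eidx i l).1 = i ∨ (eidx i l).2 = i := by
  unfold eidx; split
  · left; rfl
  · right; rfl

lemma eidx_comp_ne {a b c : Fin n} (ha : a ≠ c) (hb : b ≠ c) :
    (eidx a b).1 ≠ c ∧ (eidx a b).2 ≠ c := by
  unfold eidx; split
  · exact ⟨ha, hb⟩
  · exact ⟨hb, ha⟩

lemma deg_congr {g1 g2 : EdgeSpace n} {i : Fin n}
    (h : ∀ l, l ≠ i → g1 (eidx i l) = g2 (eidx i l)) : deg g1 i = deg g2 i := by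
  unfold deg
  congr 1
  apply Finset.filter_congr
  intro l _
  unfold adjOf
  rcases eq_or_ne l i with rfl | hl
  · simp
  · rw [h l hl]

lemma update_false_eq_true {g : EdgeSpace n} {e x : Fin n × Fin n}
    (h : Function.update g e false x = true) : g x = true := by
  rcases eq_or_ne x e with rfl | hx
  · simp at h
  · rwa [Function.update_of_ne hx] at h

lemma deg_update_false_le (g : EdgeSpace n) (e : Fin n × Fin n) (i : Fin n) :
    deg (Function.update g e false) i ≤ deg g i := by
  apply Finset.card_le_card
  intro l hl
  rw [Finset.mem_filter] at hl ⊢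
  unfold adjOf at hl ⊢
  exact ⟨hl.1, hl.2.1, update_false_eq_true hl.2.2⟩

/-- Independence over a product measure: the integral of a product of functions depending on
disjoint sets of coordinates factorizes. -/
lemma pi_integral_mul_split {ι : Type*} [Fintype ι] (m : ι → Measure Bool)
    [∀ e, IsProbabilityMeasure (m e)] (P : ι → Prop)
    (F : ({e // P e} → Bool) → ℝ) (H : ({e // ¬ P e} → Bool) → ℝ) :
    ∫ g : ι → Bool, F (fun e => g e.1) * H (fun e => g e.1) ∂(Measure.pi m)
      = (∫ g : ι → Bool, F (fun e => g e.1) ∂(Measure.pi m))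
        * (∫ g : ι → Bool, H (fun e => g e.1) ∂(Measure.pi m)) := by
  classical
  have hmp := MeasureTheory.measurePreserving_piEquivPiSubtypeProd m P
  set E := MeasurableEquiv.piEquivPiSubtypeProd (fun _ : ι => Bool) P with hE
  have key : ∀ (F' : ({e // P e} → Bool) → ℝ) (H' : ({e // ¬ P e} → Bool) → ℝ),
      ∫ g : ι → Bool, F' (fun e => g e.1) * H' (fun e => g e.1) ∂(Measure.pi m)
        = (∫ x, F' x ∂(Measure.pi fun e : {e // P e} => m e.1))
          * ∫ x, H' x ∂(Measure.pi fun e : {e // ¬ P e} => m e.1) := by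
    intro F' H'
    rw [← MeasureTheory.integral_prod_mul F' H']
    exact hmp.integral_comp E.measurableEmbedding (fun y => F' y.1 * H' y.2)
  have hF : ∫ g : ι → Bool, F (fun e => g e.1) ∂(Measure.pi m)
      = ∫ x, F x ∂(Measure.pi fun e : {e // P e} => m e.1) := by
    have := key F (fun _ => (1 : ℝ))
    simpa using this
  have hH : ∫ g : ι → Bool, H (fun e => g e.1) ∂(Measure.pi m)
      = ∫ x, H x ∂(Measure.pi fun e : {e // ¬ P e} => m e.1) := by
    have := key (fun _ => (1 : ℝ)) H
    simpa using this
  rw [key F H, hF, hH]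

end GraphMatching

end AuxLemmas

open GraphMatching in
/-- covariance bound for low-degree indicators:
with `E_i = 1(deg_G(i) ≤ k)`, for distinct `i, j` with `p_{ij} ≤ 1/2`,
`Cov(E_i, E_j) ≤ 3 p_{ij}`. -/
theorem lowdegree_indicator_covariance
    (n : ℕ) (p : Fin n → Fin n → ℝ)
    (hsym : ∀ i j, p i j = p j i)
    (hp0 : ∀ i j, 0 ≤ p i j) (hp1 : ∀ i j, p i j ≤ 1)
    (hdiag : ∀ i, p i i = 0)
    (k : ℕ) (hk : 0 < k)
    (i j : Fin n) (hij : i ≠ j) (hphalf : p i j ≤ 1 / 2) :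
    (∫ g, (if deg g i ≤ k then (1 : ℝ) else 0) * (if deg g j ≤ k then (1 : ℝ) else 0)
        ∂edgeMeasure n p) -
      (∫ g, (if deg g i ≤ k then (1 : ℝ) else 0) ∂edgeMeasure n p) *
        (∫ g, (if deg g j ≤ k then (1 : ℝ) else 0) ∂edgeMeasure n p) ≤
      3 * p i j := by
  classical
  set μ := edgeMeasure n p with hμdef
  set q := p i j with hqdef
  have hq0 : 0 ≤ q := hp0 i j
  have hq1 : q ≤ 1 := hp1 i j
  set e0 : Fin n × Fin n := eidx i j with he0
  set P : Fin n × Fin n → Prop := fun e => e ≠ e0 ∧ (e.1 = i ∨ e.2 = i) with hP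
  have hPe0 : ¬ P e0 := fun h => h.1 rfl
  -- the indicator functions
  set Ei : EdgeSpace n → ℝ := fun g => if deg g i ≤ k then 1 else 0 with hEi
  set Ej : EdgeSpace n → ℝ := fun g => if deg g j ≤ k then 1 else 0 with hEj
  set A0 : EdgeSpace n → ℝ :=
    fun g => if deg (Function.update g e0 false) i ≤ k then 1 else 0 with hA0
  set B0 : EdgeSpace n → ℝ :=
    fun g => if deg (Function.update g e0 false) j ≤ k then 1 else 0 with hB0
  set X0 : EdgeSpace n → ℝ := fun g => if g e0 = false then 1 else 0 with hX0
  -- pointwise facts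
  have hEiA0 : ∀ g, Ei g ≤ A0 g := by
    intro g
    simp only [hEi, hA0]
    split_ifs with h1 h2
    · exact le_refl 1
    · exact absurd (le_trans (deg_update_false_le g e0 i) h1) h2
    · norm_num
    · exact le_refl 0
  have hEjB0 : ∀ g, Ej g ≤ B0 g := by
    intro g
    simp only [hEj, hB0]
    split_ifs with h1 h2
    · exact le_refl 1
    · exact absurd (le_trans (deg_update_false_le g e0 j) h1) h2
    · norm_num
    · exact le_refl 0
  have hA0nn : ∀ g, (0:ℝ) ≤ A0 g := fun g => by simp only [hA0]; split_ifs <;> norm_num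
  have hB0nn : ∀ g, (0:ℝ) ≤ B0 g := fun g => by simp only [hB0]; split_ifs <;> norm_num
  have hEinn : ∀ g, (0:ℝ) ≤ Ei g := fun g => by simp only [hEi]; split_ifs <;> norm_num
  have hEjnn : ∀ g, (0:ℝ) ≤ Ej g := fun g => by simp only [hEj]; split_ifs <;> norm_num
  have hA0le1 : ∀ g, A0 g ≤ 1 := fun g => by simp only [hA0]; split_ifs <;> norm_num
  have hB0le1 : ∀ g, B0 g ≤ 1 := fun g => by simp only [hB0]; split_ifs <;> norm_num
  have hA0X0 : ∀ g, A0 g * X0 g ≤ Ei g := by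
    intro g
    simp only [hX0]
    rcases eq_or_ne (g e0) false with hg | hg
    · rw [if_pos hg, mul_one]
      have : Function.update g e0 false = g := by
        rw [← hg]; exact Function.update_eq_self e0 g
      simp only [hA0, hEi, this]
      exact le_refl _
    · rw [if_neg hg, mul_zero]
      exact hEinn g
  -- the measure is a pi measure with probability factors
  set m : Fin n × Fin n → Measure Bool := fun e => bern (p e.1 e.2) with hm
  have hμpi : μ = Measure.pi m := rfl
  haveI : ∀ e : Fin n × Fin n, IsProbabilityMeasure (m e) := fun e => by
    simp only [hm]; infer_instance
  -- A0 depends only on P-coordinates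
  set F : ({e // P e} → Bool) → ℝ := fun x =>
    if deg (fun e => if h : P e then x ⟨e, h⟩ else false) i ≤ k then 1 else 0 with hF
  have hA0F : ∀ g : EdgeSpace n, A0 g = F (fun e => g e.1) := by
    intro g
    simp only [hA0, hF]
    congr 1
    apply propext
    constructor <;> intro h <;> refine le_trans (le_of_eq ?_) h
    · apply deg_congr
      intro l hl
      rcases eq_or_ne (eidx i l) e0 with he | he
      · rw [he, Function.update_self, dif_neg hPe0]
      · rw [Function.update_of_ne he, dif_pos ⟨he, (eidx_fst_or_snd i l)⟩]
    · apply deg_congr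
      intro l hl
      rcases eq_or_ne (eidx i l) e0 with he | he
      · rw [he, Function.update_self, dif_neg hPe0]
      · rw [Function.update_of_ne he, dif_pos ⟨he, (eidx_fst_or_snd i l)⟩]
  -- B0 depends only on non-P-coordinates
  set H : ({e // ¬ P e} → Bool) → ℝ := fun y =>
    if deg (fun e => if h : ¬ P e ∧ e ≠ e0 then y ⟨e, h.1⟩ else false) j ≤ k then 1 else 0
    with hHdef
  have hnotP : ∀ m' : Fin n, m' ≠ j → m' ≠ i → ¬ P (eidx j m') ∧ eidx j m' ≠ e0 := by
    intro m' hmj hmi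
    have hcomp := eidx_comp_ne (a := j) (b := m') (c := i) (Ne.symm hij) hmi
    have hne0 : eidx j m' ≠ e0 := by
      intro h
      rcases eidx_fst_or_snd i j with h1 | h1
      · exact hcomp.1 (by rw [h, he0]; exact h1)
      · exact hcomp.2 (by rw [h, he0]; exact h1)
    exact ⟨fun hp' => by rcases hp'.2 with h1 | h1; exact hcomp.1 h1; exact hcomp.2 h1, hne0⟩
  have hB0H : ∀ g : EdgeSpace n, B0 g = H (fun e => g e.1) := by
    intro g
    simp only [hB0, hHdef]
    congr 1
    apply propext
    have hdeg : deg (fun e => if h : ¬ P e ∧ e ≠ e0 then g e else false) j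
        = deg (Function.update g e0 false) j := by
      apply deg_congr
      intro l hl
      rcases eq_or_ne l i with rfl | hli
      · have : eidx j l = e0 := by rw [he0]; exact (eidx_symm l j).symm
        rw [this, Function.update_self, dif_neg (by simp)]
      · have h2 := hnotP l hl hli
        rw [Function.update_of_ne h2.2, dif_pos h2]
    constructor <;> intro h <;> refine le_trans (le_of_eq ?_) h
    · exact hdeg
    · exact hdeg.symm
  -- X0 depends only on non-P-coordinates
  set H2 : ({e // ¬ P e} → Bool) → ℝ := fun y =>
    if y ⟨e0, hPe0⟩ = false then 1 else 0 with hH2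
  have hX0H2 : ∀ g : EdgeSpace n, X0 g = H2 (fun e => g e.1) := fun g => rfl
  -- independence
  have hsplitAB : ∫ g, A0 g * B0 g ∂μ = (∫ g, A0 g ∂μ) * ∫ g, B0 g ∂μ := by
    rw [hμpi]
    simp only [fun g : EdgeSpace n => hA0F g, fun g : EdgeSpace n => hB0H g]
    exact pi_integral_mul_split m P F H
  have hsplitAX : ∫ g, A0 g * X0 g ∂μ = (∫ g, A0 g ∂μ) * ∫ g, X0 g ∂μ := by
    rw [hμpi]
    simp only [fun g : EdgeSpace n => hA0F g, fun g : EdgeSpace n => hX0H2 g]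
    exact pi_integral_mul_split m P F H2
  -- value of ∫ X0
  have hpe0 : p e0.1 e0.2 = q := by
    rw [he0]; unfold eidx; split
    · rfl
    · exact (hsym j i).symm ▸ hsym j i
  have hX0int : ∫ g, X0 g ∂μ = 1 - q := by
    have hset : {g : EdgeSpace n | g e0 = false}
        = Set.pi Set.univ (fun e => if e = e0 then {false} else (Set.univ : Set Bool)) := by
      ext g
      simp only [Set.mem_setOf_eq, Set.mem_pi, Set.mem_univ, forall_true_left]
      constructor
      · intro h e
        split_ifs with he
        · rw [he]; exact h
        · trivial
      · intro h
        have := h e0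
        simpa using this
    have hmeas : MeasurableSet {g : EdgeSpace n | g e0 = false} := by
      have hh : {g : EdgeSpace n | g e0 = false} = (fun g : EdgeSpace n => g e0) ⁻¹' {false} := rfl
      rw [hh]; exact measurable_pi_apply e0 (MeasurableSet.singleton false)
    have h1 : ∫ g, X0 g ∂μ = (μ {g : EdgeSpace n | g e0 = false}).toReal := by
      rw [← Measure.real_def, ← integral_indicator_one hmeas]
      congr 1
      funext g
      simp only [hX0, Set.indicator_apply, Set.mem_setOf_eq, Pi.one_apply]
    have h2 : μ {g : EdgeSpace n | g e0 = false} = m e0 {false} := by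
      rw [hμpi, hset, Measure.pi_pi]
      rw [Finset.prod_eq_single e0]
      · rw [if_pos rfl]
      · intro b _ hb
        rw [if_neg hb]
        exact measure_univ
      · intro h; exact absurd (Finset.mem_univ e0) h
    have h3 : m e0 {false} = 1 - ENNReal.ofReal q := by
      simp only [hm]
      unfold bern
      rw [PMF.toMeasure_apply_singleton _ _ (MeasurableSet.singleton false)]
      rw [PMF.bernoulli_apply]
      simp only [Bool.cond_false]
      congr 1
      rw [hpe0]
      rw [min_eq_left (Real.toNNReal_le_one.mpr hq1)]
    rw [h1, h2, h3]
    rw [ENNReal.toReal_sub_of_le (ENNReal.ofReal_le_one.mpr hq1) (by norm_num)]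
    rw [ENNReal.toReal_one, ENNReal.toReal_ofReal hq0]
  -- integrability (finite space)
  have hint : ∀ f : EdgeSpace n → ℝ, Integrable f μ := fun f => Integrable.of_finite
  -- integral bounds
  have hab : ∫ g, Ei g * Ej g ∂μ ≤ ∫ g, A0 g * B0 g ∂μ := by
    apply integral_mono (hint _) (hint _)
    intro g
    exact mul_le_mul (hEiA0 g) (hEjB0 g) (hEjnn g) (hA0nn g)
  have hEilow : (∫ g, A0 g ∂μ) * (1 - q) ≤ ∫ g, Ei g ∂μ := by
    rw [← hX0int, ← hsplitAX]
    exact integral_mono (hint _) (hint _) hA0X0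
  have hB0X0 : ∀ g, B0 g * X0 g ≤ Ej g := by
    intro g
    simp only [hX0]
    rcases eq_or_ne (g e0) false with hg | hg
    · rw [if_pos hg, mul_one]
      have : Function.update g e0 false = g := by
        rw [← hg]; exact Function.update_eq_self e0 g
      simp only [hB0, hEj, this]
      exact le_refl _
    · rw [if_neg hg, mul_zero]
      exact hEjnn g
  have hsplitBX : ∫ g, B0 g * X0 g ∂μ = (∫ g, B0 g ∂μ) * ∫ g, X0 g ∂μ := by
    set Q : Fin n × Fin n → Prop := fun e => e ≠ e0 ∧ (e.1 = j ∨ e.2 = j) with hQ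
    have hQe0 : ¬ Q e0 := fun h => h.1 rfl
    set FB : ({e // Q e} → Bool) → ℝ := fun x =>
      if deg (fun e => if h : Q e then x ⟨e, h⟩ else false) j ≤ k then 1 else 0 with hFB
    have hB0FB : ∀ g : EdgeSpace n, B0 g = FB (fun e => g e.1) := by
      intro g
      simp only [hB0, hFB]
      congr 1
      apply propext
      have hdeg : deg (fun e => if h : Q e then g e else false) j
          = deg (Function.update g e0 false) j := by
        apply deg_congr
        intro l hl
        rcases eq_or_ne (eidx j l) e0 with he | he
        · rw [he, Function.update_self, dif_neg hQe0]
        · rw [Function.update_of_ne he, dif_pos ⟨he, (eidx_fst_or_snd j l)⟩]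
      constructor <;> intro h <;> refine le_trans (le_of_eq ?_) h
      · exact hdeg
      · exact hdeg.symm
    set H2j : ({e // ¬ Q e} → Bool) → ℝ := fun y =>
      if y ⟨e0, hQe0⟩ = false then 1 else 0 with hH2j
    have hX0H2j : ∀ g : EdgeSpace n, X0 g = H2j (fun e => g e.1) := fun g => rfl
    rw [hμpi]
    simp only [fun g : EdgeSpace n => hB0FB g, fun g : EdgeSpace n => hX0H2j g]
    exact pi_integral_mul_split m Q FB H2j
  have hEjlow : (∫ g, B0 g ∂μ) * (1 - q) ≤ ∫ g, Ej g ∂μ := by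
    rw [← hX0int, ← hsplitBX]
    exact integral_mono (hint _) (hint _) hB0X0
  -- integral range facts
  haveI : IsProbabilityMeasure μ := edgeMeasure_isProbabilityMeasure p
  have hIA0nn : 0 ≤ ∫ g, A0 g ∂μ := integral_nonneg hA0nn
  have hIB0nn : 0 ≤ ∫ g, B0 g ∂μ := integral_nonneg hB0nn
  have hIA0le : ∫ g, A0 g ∂μ ≤ 1 := by
    calc ∫ g, A0 g ∂μ ≤ ∫ _g, (1:ℝ) ∂μ := integral_mono (hint _) (hint _) hA0le1
    _ = 1 := by simp
  have hIB0le : ∫ g, B0 g ∂μ ≤ 1 := by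
    calc ∫ g, B0 g ∂μ ≤ ∫ _g, (1:ℝ) ∂μ := integral_mono (hint _) (hint _) hB0le1
    _ = 1 := by simp
  have hIEinn : 0 ≤ ∫ g, Ei g ∂μ := integral_nonneg hEinn
  have hIEjnn : 0 ≤ ∫ g, Ej g ∂μ := integral_nonneg hEjnn
  -- put everything together
  have hgoal1 : (∫ g, Ei g * Ej g ∂μ) ≤ (∫ g, A0 g ∂μ) * ∫ g, B0 g ∂μ :=
    le_trans hab (le_of_eq hsplitAB)
  have hprod : ((∫ g, A0 g ∂μ) * (1 - q)) * ((∫ g, B0 g ∂μ) * (1 - q))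
      ≤ (∫ g, Ei g ∂μ) * ∫ g, Ej g ∂μ := by
    apply mul_le_mul hEilow hEjlow (mul_nonneg hIB0nn (by linarith)) hIEinn
  show (∫ g, Ei g * Ej g ∂μ) - (∫ g, Ei g ∂μ) * (∫ g, Ej g ∂μ) ≤ 3 * q
  nlinarith [mul_nonneg hIA0nn hIB0nn, sq_nonneg q,
    mul_le_one₀ hIA0le hIB0nn hIB0le, mul_nonneg (mul_nonneg hIA0nn hIB0nn) hq0]
end
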